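/- arXiv:2006.03225 — 5 statements merged into one kernel-verified Lean document; each statement's English description precedes it below -/
import Mathlib

section
/- Let ε ∈ (0,3) be a constant. There exist constants c > 0 and d₀ such that for all d > d₀, every n-vertex graph with maximum degree at most d containing at most n·d^{2-ε} triangles has an independent set of size at least c·(n/d)·log d. -/
open Finset

attribute [local instance] Classical.propDecidable

lemma sum_pow_powerset {V : Type} (p q : ℝ) (U : Finset V) :
    ∑ t ∈ U.powerset, p ^ t.card * q ^ (U.card - t.card) = (p + q) ^ U.card := by
  classical
  have h := Finset.prod_add (fun _ : V => p) (fun _ : V => q) U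
  simp only [Finset.prod_const] at h
  rw [h]
  apply Finset.sum_congr rfl
  intro t ht
  rw [Finset.card_sdiff_of_subset (Finset.mem_powerset.mp ht)]

lemma sum_w_superset {V : Type} [Fintype V] (p q : ℝ) (A : Finset V) :
    ∑ S ∈ (Finset.univ : Finset V).powerset,
      (if A ⊆ S then p ^ S.card * q ^ (Fintype.card V - S.card) else 0)
      = p ^ A.card * (p + q) ^ (Fintype.card V - A.card) := by
  classical
  have hcard : (Finset.univ \ A).card = Fintype.card V - A.card := by
    rw [Finset.card_sdiff_of_subset (Finset.subset_univ A), Finset.card_univ]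
  rw [← Finset.sum_filter]
  have : ∑ S ∈ Finset.univ.powerset.filter (fun S => A ⊆ S),
        p ^ S.card * q ^ (Fintype.card V - S.card)
      = ∑ S' ∈ (Finset.univ \ A).powerset,
        p ^ (A.card + S'.card) * q ^ ((Finset.univ \ A).card - S'.card) := by
    apply Finset.sum_nbij' (i := fun S => S \ A) (j := fun S' => A ∪ S')
    · intro S hS
      simp only [Finset.mem_filter, Finset.mem_powerset] at hS ⊢
      exact Finset.sdiff_subset_sdiff hS.1 (Finset.Subset.refl A)
    · intro S' hS'
      simp only [Finset.mem_powerset, Finset.subset_sdiff] at hS'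
      simp only [Finset.mem_filter, Finset.mem_powerset]
      exact ⟨Finset.subset_univ _, Finset.subset_union_left⟩
    · intro S hS
      simp only [Finset.mem_filter, Finset.mem_powerset] at hS
      exact Finset.union_sdiff_of_subset hS.2
    · intro S' hS'
      simp only [Finset.mem_powerset, Finset.subset_sdiff] at hS'
      exact Finset.union_sdiff_cancel_left hS'.2.symm
    · intro S hS
      simp only [Finset.mem_filter, Finset.mem_powerset] at hS
      have h1 : A.card + (S \ A).card = S.card := by
        have := Finset.card_sdiff_add_card_eq_card hS.2
        omega
      have h2 : (Finset.univ \ A).card - (S \ A).card = Fintype.card V - S.card := by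
        have hA := Finset.card_le_card hS.2
        have hs := Finset.card_le_card hS.1
        rw [Finset.card_univ] at hs
        omega
      rw [h1, h2]
  rw [this]
  have expand : ∀ S' ∈ (Finset.univ \ A).powerset,
      p ^ (A.card + S'.card) * q ^ ((Finset.univ \ A).card - S'.card)
      = p ^ A.card * (p ^ S'.card * q ^ ((Finset.univ \ A).card - S'.card)) := by
    intro S' _; rw [pow_add, mul_assoc]
  rw [Finset.sum_congr rfl expand, ← Finset.mul_sum, sum_pow_powerset, hcard]

lemma sum_card_powerset' {V : Type} [DecidableEq V] (F : Finset V) :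
    2 * ∑ J ∈ F.powerset, J.card = F.card * 2 ^ F.card := by
  classical
  have h : ∑ J ∈ F.powerset, J.card = ∑ J ∈ F.powerset, (F \ J).card := by
    apply Finset.sum_nbij' (i := fun J => F \ J) (j := fun J => F \ J)
    · intro J hJ; simp
    · intro J hJ; simp
    · intro J hJ; simp only [Finset.mem_powerset] at hJ; exact Finset.sdiff_sdiff_eq_self hJ
    · intro J hJ; simp only [Finset.mem_powerset] at hJ; exact Finset.sdiff_sdiff_eq_self hJ
    · intro J hJ; simp only [Finset.mem_powerset] at hJ
      rw [Finset.sdiff_sdiff_eq_self hJ]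
  have h2 : ∀ J ∈ F.powerset, J.card + (F \ J).card = F.card := by
    intro J hJ
    simp only [Finset.mem_powerset] at hJ
    have := Finset.card_sdiff_add_card_eq_card hJ
    omega
  have h3 := Finset.sum_congr rfl h2
  rw [Finset.sum_add_distrib, ← h] at h3
  rw [Finset.sum_const, Finset.card_powerset, smul_eq_mul] at h3
  rw [two_mul, Nat.mul_comm]
  exact h3

lemma key_numeric (D : ℝ) (hD : 1 ≤ D) (t : ℕ) :
    ((2:ℝ)^t + 1) * (Real.logb 2 D / 8) ≤ D + t * 2^t / 2 := by
  have hD0 : (0:ℝ) < D := lt_of_lt_of_le one_pos hD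
  have hlogb0 : 0 ≤ Real.logb 2 D := Real.logb_nonneg one_lt_two hD
  have hpow : (0:ℝ) < (2:ℝ)^t := by positivity
  have h1 : Real.logb 2 D / 8 ≤ D / 2^(t+1) + t / 4 := by
    rcases le_or_gt (Real.logb 2 D) (2 * t) with h | h
    · have : Real.logb 2 D / 8 ≤ t / 4 := by linarith
      have : (0:ℝ) ≤ D / 2^(t+1) := by positivity
      linarith
    · -- 2^t < 2^(logb 2 D / 2) = D^(1/2)
      have hrt : ((2:ℝ))^(t:ℕ) = (2:ℝ)^((t:ℝ)) := (Real.rpow_natCast 2 t).symm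
      have hle : (t:ℝ) ≤ Real.logb 2 D / 2 := by linarith
      have h2t : (2:ℝ)^((t:ℝ)) ≤ (2:ℝ)^(Real.logb 2 D / 2) :=
        Real.rpow_le_rpow_of_exponent_le one_le_two hle
      have hsq : (2:ℝ)^(Real.logb 2 D / 2) = D^((1:ℝ)/2) := by
        rw [div_eq_mul_inv, Real.rpow_mul (by norm_num : (0:ℝ) ≤ 2), Real.rpow_logb two_pos (by norm_num) hD0]
        norm_num
      have hDhalf : (0:ℝ) < D^((1:ℝ)/2) := Real.rpow_pos_of_pos hD0 _
      have hDsplit : D^((1:ℝ)/2) * D^((1:ℝ)/2) = D := by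
        rw [← Real.rpow_add hD0]; norm_num
      have hub : (2:ℝ)^t ≤ D^((1:ℝ)/2) := by rw [hrt]; rw [hsq] at h2t; exact h2t
      have hlow : D^((1:ℝ)/2) / 2 ≤ D / 2^(t+1) := by
        rw [pow_succ]
        rw [div_le_div_iff₀ (by norm_num) (by positivity)]
        calc D^((1:ℝ)/2) * (2^t * 2) = (D^((1:ℝ)/2) * 2^t) * 2 := by ring
        _ ≤ (D^((1:ℝ)/2) * D^((1:ℝ)/2)) * 2 := by nlinarith
        _ = D * 2 := by rw [hDsplit]
      -- logb 2 D ≤ 4 √D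
      have hlogD : Real.log D ≤ 2 * D^((1:ℝ)/2) := by
        have := Real.log_le_sub_one_of_pos hDhalf
        have hlr : Real.log (D^((1:ℝ)/2)) = (1/2) * Real.log D := Real.log_rpow hD0 _
        rw [hlr] at this
        linarith
      have hlog2 : (1:ℝ)/2 < Real.log 2 := by
        have := Real.log_two_gt_d9; linarith
      have hlogb : Real.logb 2 D ≤ 4 * D^((1:ℝ)/2) := by
        rw [Real.logb, div_le_iff₀ (by linarith)]
        nlinarith [Real.log_nonneg hD]
      have : Real.logb 2 D / 8 ≤ D^((1:ℝ)/2) / 2 := by linarith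
      have ht4 : (0:ℝ) ≤ (t:ℝ)/4 := by positivity
      linarith
  calc ((2:ℝ)^t + 1) * (Real.logb 2 D / 8)
      ≤ (2:ℝ)^(t+1) * (Real.logb 2 D / 8) := by
        apply mul_le_mul_of_nonneg_right _ (by positivity)
        have h1t : (1:ℝ) ≤ 2^t := one_le_pow₀ (by norm_num : (1:ℝ) ≤ 2)
        rw [pow_succ]; linarith
    _ ≤ (2:ℝ)^(t+1) * (D / 2^(t+1) + t / 4) := by
        apply mul_le_mul_of_nonneg_left h1 (by positivity)
    _ = D + t * 2^t / 2 := by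
        field_simp
        ring

lemma card_nbr_inter {V : Type} [Fintype V] (G : SimpleGraph V) [DecidableRel G.Adj]
    (x : V) (B : Finset V) :
    (G.neighborFinset x ∩ B).card = ∑ u ∈ B, if G.Adj x u then 1 else 0 := by
  classical
  rw [Finset.inter_comm, ← Finset.filter_mem_eq_inter, Finset.card_filter]
  apply Finset.sum_congr rfl
  intro u _
  congr 1
  · simp [SimpleGraph.mem_neighborFinset]

lemma exp_count {V : Type} [Fintype V] {ι : Type} (p q : ℝ) (hq : p + q = 1)
    (T : Finset ι) (A : ι → Finset V) :
    ∑ S ∈ (Finset.univ : Finset V).powerset,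
      (p ^ S.card * q ^ (Fintype.card V - S.card)) * (∑ i ∈ T, if A i ⊆ S then (1:ℝ) else 0)
    = ∑ i ∈ T, p ^ (A i).card := by
  have h1 : ∀ S : Finset V,
      (p ^ S.card * q ^ (Fintype.card V - S.card)) * (∑ i ∈ T, if A i ⊆ S then (1:ℝ) else 0)
      = ∑ i ∈ T, (if A i ⊆ S then p ^ S.card * q ^ (Fintype.card V - S.card) else 0) := by
    intro S
    rw [Finset.mul_sum]
    apply Finset.sum_congr rfl
    intro i _
    rw [mul_ite, mul_one, mul_zero]
  simp only [h1]
  rw [Finset.sum_comm]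
  apply Finset.sum_congr rfl
  intro i _
  rw [sum_w_superset p q (A i), hq, one_pow, mul_one]

lemma shearer {V : Type} [Fintype V] (G : SimpleGraph V) (A : Finset V) (D : ℝ) (hD : 1 ≤ D)
    (htf : ∀ t ∈ G.cliqueFinset 3, ¬ t ⊆ A)
    (hdeg : ∀ v ∈ A, ((G.neighborFinset v ∩ A).card : ℝ) ≤ D) :
    ∃ W : Finset V, W ⊆ A ∧ (∀ u ∈ W, ∀ x ∈ W, u ≠ x → ¬ G.Adj u x) ∧
      (A.card : ℝ) * Real.logb 2 D / (16 * D) ≤ W.card := by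
  classical
  have hD0 : (0:ℝ) < D := lt_of_lt_of_le one_pos hD
  set I : Finset (Finset V) :=
    A.powerset.filter (fun W => ∀ u ∈ W, ∀ x ∈ W, u ≠ x → ¬ G.Adj u x) with hIdef
  have hImem : ∀ W, W ∈ I ↔ (W ⊆ A ∧ ∀ u ∈ W, ∀ x ∈ W, u ≠ x → ¬ G.Adj u x) := by
    intro W; simp [hIdef]
  have hempty : (∅ : Finset V) ∈ I := by simp [hIdef]
  have hIne : I.Nonempty := ⟨∅, hempty⟩
  set L : ℝ := Real.logb 2 D / 8 with hLdef
  have hL0 : 0 ≤ L := div_nonneg (Real.logb_nonneg one_lt_two hD) (by norm_num)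
  set g : V → Finset V → ℝ :=
    fun v W => (if v ∈ W then D else 0) + ((G.neighborFinset v ∩ W).card : ℝ) with hgdef
  -- LOWER BOUND
  have hlower : ∀ v ∈ A, (I.card : ℝ) * L ≤ ∑ W ∈ I, g v W := by
    intro v hvA
    set key : Finset V → Finset V := fun W => W \ insert v (G.neighborFinset v) with hkey
    have hmaps : ∀ W ∈ I, key W ∈ I.image key := fun W hW => Finset.mem_image_of_mem key hW
    rw [← Finset.sum_fiberwise_of_maps_to hmaps (g v)]
    have hcardsplit : I.card = ∑ S ∈ I.image key, (I.filter (fun W => key W = S)).card :=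
      Finset.card_eq_sum_card_fiberwise hmaps
    have hfiber : ∀ S ∈ I.image key,
        ((I.filter (fun W => key W = S)).card : ℝ) * L
          ≤ ∑ W ∈ I.filter (fun W => key W = S), g v W := by
      intro S hS
      obtain ⟨W₀, hW₀I, hW₀key⟩ := Finset.mem_image.mp hS
      have hW₀I' := (hImem W₀).mp hW₀I
      have hSdisj : ∀ x ∈ S, x ∉ insert v (G.neighborFinset v) := by
        intro x hx; rw [← hW₀key] at hx; exact (Finset.mem_sdiff.mp hx).2
      have hSsub : S ⊆ A := by
        intro x hx; rw [← hW₀key] at hx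
        exact hW₀I'.1 (Finset.mem_sdiff.mp hx).1
      have hSind : ∀ u ∈ S, ∀ x ∈ S, u ≠ x → ¬ G.Adj u x := by
        intro u hu x hx
        rw [← hW₀key] at hu hx
        exact hW₀I'.2 u (Finset.mem_sdiff.mp hu).1 x (Finset.mem_sdiff.mp hx).1
      have hvS : v ∉ S := fun h => hSdisj v h (Finset.mem_insert_self v _)
      have hSnotNv : ∀ x ∈ S, x ∉ G.neighborFinset v := by
        intro x hx h
        exact hSdisj x hx (Finset.mem_insert_of_mem h)
      have hSNv : ∀ x ∈ S, ¬ G.Adj v x := by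
        intro x hx hadj
        exact hSnotNv x hx ((G.mem_neighborFinset v x).mpr hadj)
      set F : Finset V := (G.neighborFinset v ∩ A).filter (fun u => ∀ s ∈ S, ¬ G.Adj u s)
        with hFdef
      have hFNv : ∀ u ∈ F, G.Adj v u := by
        intro u hu
        exact (G.mem_neighborFinset v u).mp (Finset.mem_inter.mp (Finset.mem_filter.mp hu).1).1
      have hvF : v ∉ F := fun h => G.irrefl (hFNv v h)
      have hFA : ∀ u ∈ F, u ∈ A := by
        intro u hu
        exact (Finset.mem_inter.mp (Finset.mem_filter.mp hu).1).2
      have hFfree : ∀ u ∈ F, ∀ s ∈ S, ¬ G.Adj u s := by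
        intro u hu; exact (Finset.mem_filter.mp hu).2
      have hFS : ∀ u ∈ F, u ∉ S := by
        intro u hu hmem; exact hSNv u hmem (hFNv u hu)
      have hFind : ∀ u ∈ F, ∀ x ∈ F, u ≠ x → ¬ G.Adj u x := by
        intro u hu x hx hne hadj
        refine htf ({v, u, x} : Finset V) ?_ ?_
        · rw [SimpleGraph.mem_cliqueFinset_iff]
          exact SimpleGraph.is3Clique_triple_iff.mpr ⟨hFNv u hu, hFNv x hx, hadj⟩
        · intro y hy
          simp only [Finset.mem_insert, Finset.mem_singleton] at hy
          rcases hy with rfl | rfl | rfl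
          · exact hvA
          · exact hFA _ hu
          · exact hFA _ hx
      -- the fiber is exactly this set
      have hclaim : I.filter (fun W => key W = S)
          = F.powerset.image (fun J => S ∪ J) ∪ {insert v S} := by
        apply Finset.Subset.antisymm
        · intro W hW
          obtain ⟨hWI, hWkey⟩ := Finset.mem_filter.mp hW
          obtain ⟨hWA, hWind⟩ := (hImem W).mp hWI
          have hSW : S ⊆ W := by
            intro x hx; rw [← hWkey] at hx; exact (Finset.mem_sdiff.mp hx).1
          by_cases hvW : v ∈ W
          · have hWeq : W = insert v S := by
              apply Finset.Subset.antisymm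
              · intro x hxW
                by_cases hxv : x = v
                · exact hxv ▸ Finset.mem_insert_self v S
                · have hxNv : x ∉ G.neighborFinset v := by
                    intro hmem
                    exact hWind v hvW x hxW (fun h => hxv h.symm)
                      ((G.mem_neighborFinset v x).mp hmem)
                  have : x ∈ key W := by
                    rw [hkey]
                    simp only [Finset.mem_sdiff, Finset.mem_insert]
                    exact ⟨hxW, fun h => h.elim hxv (fun h2 => hxNv h2)⟩
                  rw [hWkey] at this
                  exact Finset.mem_insert_of_mem this
              · intro x hx
                rcases Finset.mem_insert.mp hx with rfl | hxS
                · exact hvW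
                · exact hSW hxS
            rw [hWeq]
            exact Finset.mem_union_right _ (Finset.mem_singleton_self _)
          · refine Finset.mem_union_left _ (Finset.mem_image.mpr ⟨W ∩ G.neighborFinset v, ?_, ?_⟩)
            · rw [Finset.mem_powerset]
              intro u hu
              obtain ⟨huW, huNv⟩ := Finset.mem_inter.mp hu
              rw [hFdef]
              refine Finset.mem_filter.mpr ⟨Finset.mem_inter.mpr ⟨huNv, hWA huW⟩, ?_⟩
              intro s hs
              have hsW : s ∈ W := hSW hs
              have hne : u ≠ s := fun h => hSnotNv s hs (h ▸ huNv)
              exact hWind u huW s hsW hne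
            · apply Finset.Subset.antisymm
              · exact Finset.union_subset hSW Finset.inter_subset_left
              · intro x hxW
                by_cases hxNv : x ∈ G.neighborFinset v
                · exact Finset.mem_union_right _ (Finset.mem_inter.mpr ⟨hxW, hxNv⟩)
                · have hxv : x ≠ v := fun h => hvW (h ▸ hxW)
                  have : x ∈ key W := by
                    rw [hkey]
                    simp only [Finset.mem_sdiff, Finset.mem_insert]
                    exact ⟨hxW, fun h => h.elim hxv (fun h2 => hxNv h2)⟩
                  rw [hWkey] at this
                  exact Finset.mem_union_left _ this
        · intro W hW
          rcases Finset.mem_union.mp hW with h | h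
          · obtain ⟨J, hJ, rfl⟩ := Finset.mem_image.mp h
            rw [Finset.mem_powerset] at hJ
            refine Finset.mem_filter.mpr ⟨(hImem _).mpr ⟨?_, ?_⟩, ?_⟩
            · intro x hx
              rcases Finset.mem_union.mp hx with h1 | h1
              · exact hSsub h1
              · exact hFA x (hJ h1)
            · intro u hu x hx hne hadj
              rcases Finset.mem_union.mp hu with h1 | h1 <;>
                rcases Finset.mem_union.mp hx with h2 | h2
              · exact hSind u h1 x h2 hne hadj
              · exact hFfree x (hJ h2) u h1 hadj.symm
              · exact hFfree u (hJ h1) x h2 hadj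
              · exact hFind u (hJ h1) x (hJ h2) hne hadj
            · rw [hkey]
              apply Finset.Subset.antisymm
              · intro x hx
                obtain ⟨hx1, hx2⟩ := Finset.mem_sdiff.mp hx
                rcases Finset.mem_union.mp hx1 with h1 | h1
                · exact h1
                · exact absurd (Finset.mem_insert_of_mem
                    ((G.mem_neighborFinset v x).mpr (hFNv x (hJ h1)))) hx2
              · intro x hx
                exact Finset.mem_sdiff.mpr ⟨Finset.mem_union_left _ hx, hSdisj x hx⟩
          · rw [Finset.mem_singleton] at h
            subst h
            refine Finset.mem_filter.mpr ⟨(hImem _).mpr ⟨?_, ?_⟩, ?_⟩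
            · intro x hx
              rcases Finset.mem_insert.mp hx with rfl | h1
              · exact hvA
              · exact hSsub h1
            · intro u hu x hx hne hadj
              rcases Finset.mem_insert.mp hu with rfl | h1 <;>
                rcases Finset.mem_insert.mp hx with rfl | h2
              · exact hne rfl
              · exact hSNv x h2 hadj
              · exact hSNv u h1 hadj.symm
              · exact hSind u h1 x h2 hne hadj
            · rw [hkey]
              apply Finset.Subset.antisymm
              · intro x hx
                obtain ⟨hx1, hx2⟩ := Finset.mem_sdiff.mp hx
                rcases Finset.mem_insert.mp hx1 with rfl | h1
                · exact absurd (Finset.mem_insert_self x _) hx2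
                · exact h1
              · intro x hx
                exact Finset.mem_sdiff.mpr
                  ⟨Finset.mem_insert_of_mem hx, hSdisj x hx⟩
      -- auxiliary facts about the explicit fiber description
      have hvJ : ∀ J ∈ F.powerset, v ∉ S ∪ J := by
        intro J hJ h
        rcases Finset.mem_union.mp h with h1 | h1
        · exact hvS h1
        · exact hvF (Finset.mem_powerset.mp hJ h1)
      have hdisj : Disjoint (F.powerset.image (fun J => S ∪ J))
          ({insert v S} : Finset (Finset V)) := by
        rw [Finset.disjoint_singleton_right]
        intro h
        obtain ⟨J, hJ, hJeq⟩ := Finset.mem_image.mp h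
        exact hvJ J hJ (hJeq.symm ▸ Finset.mem_insert_self v S)
      have hNvJ : ∀ J ∈ F.powerset, G.neighborFinset v ∩ (S ∪ J) = J := by
        intro J hJ
        apply Finset.Subset.antisymm
        · intro x hx
          obtain ⟨hx1, hx2⟩ := Finset.mem_inter.mp hx
          rcases Finset.mem_union.mp hx2 with h1 | h1
          · exact absurd hx1 (hSnotNv x h1)
          · exact h1
        · intro x hx
          exact Finset.mem_inter.mpr
            ⟨(G.mem_neighborFinset v x).mpr (hFNv x (Finset.mem_powerset.mp hJ hx)),
              Finset.mem_union_right _ hx⟩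
      have hinj : ∀ J1 ∈ F.powerset, ∀ J2 ∈ F.powerset, S ∪ J1 = S ∪ J2 → J1 = J2 := by
        intro J1 hJ1 J2 hJ2 heq
        rw [← hNvJ J1 hJ1, ← hNvJ J2 hJ2, heq]
      have hinjOn : Set.InjOn (fun J => S ∪ J) ↑F.powerset := by
        intro J1 h1 J2 h2 heq
        exact hinj J1 (Finset.mem_coe.mp h1) J2 (Finset.mem_coe.mp h2) heq
      have hcardfiber : (I.filter (fun W => key W = S)).card = 2 ^ F.card + 1 := by
        rw [hclaim, Finset.card_union_of_disjoint hdisj,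
          Finset.card_image_of_injOn hinjOn, Finset.card_powerset, Finset.card_singleton]
      have hgJ : ∀ J ∈ F.powerset, g v (S ∪ J) = (J.card : ℝ) := by
        intro J hJ
        rw [hgdef]
        simp only
        rw [if_neg (hvJ J hJ), hNvJ J hJ, zero_add]
      have hgv : g v (insert v S) = D := by
        have h2 : G.neighborFinset v ∩ insert v S = ∅ := by
          apply Finset.eq_empty_of_forall_notMem
          intro x hx
          obtain ⟨hx1, hx2⟩ := Finset.mem_inter.mp hx
          rcases Finset.mem_insert.mp hx2 with rfl | h3
          · exact G.irrefl ((G.mem_neighborFinset x x).mp hx1)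
          · exact hSnotNv x h3 hx1
        rw [hgdef]
        simp only
        rw [if_pos (Finset.mem_insert_self v S), h2]
        simp
      have hsum : ∑ W ∈ I.filter (fun W => key W = S), g v W
          = (∑ J ∈ F.powerset, (J.card : ℝ)) + D := by
        rw [hclaim, Finset.sum_union hdisj, Finset.sum_singleton, Finset.sum_image hinj, hgv]
        congr 1
        exact Finset.sum_congr rfl hgJ
      have hsumcast : ∑ J ∈ F.powerset, (J.card : ℝ)
          = (F.card : ℝ) * 2 ^ F.card / 2 := by
        have h := sum_card_powerset' F
        have h2 : (2:ℝ) * ∑ J ∈ F.powerset, (J.card : ℝ)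
            = (F.card : ℝ) * 2 ^ F.card := by exact_mod_cast h
        linarith
      rw [hsum, hsumcast, hcardfiber, hLdef]
      push_cast
      linarith [key_numeric D hD F.card]
    calc (I.card : ℝ) * L
        = ∑ S ∈ I.image key, ((I.filter (fun W => key W = S)).card : ℝ) * L := by
          rw [hcardsplit]
          push_cast
          rw [Finset.sum_mul]
      _ ≤ ∑ S ∈ I.image key, ∑ W ∈ I.filter (fun W => key W = S), g v W :=
          Finset.sum_le_sum hfiber
  -- UPPER BOUND
  have hupper : ∀ W ∈ I, ∑ v ∈ A, g v W ≤ 2 * D * W.card := by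
    intro W hW
    obtain ⟨hWA, hWind⟩ := (hImem W).mp hW
    have h1 : ∑ v ∈ A, (if v ∈ W then D else 0) = D * W.card := by
      rw [Finset.sum_ite_mem, Finset.sum_const,
        Finset.inter_eq_right.mpr hWA, nsmul_eq_mul, mul_comm]
    have hswap : ∑ v ∈ A, (G.neighborFinset v ∩ W).card
        = ∑ u ∈ W, (G.neighborFinset u ∩ A).card := by
      have e1 : ∀ v, (G.neighborFinset v ∩ W).card = ∑ u ∈ W, if G.Adj v u then 1 else 0 :=
        fun v => card_nbr_inter G v W
      have e2 : ∀ u, (G.neighborFinset u ∩ A).card = ∑ v ∈ A, if G.Adj u v then 1 else 0 :=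
        fun u => card_nbr_inter G u A
      simp only [e1, e2]
      rw [Finset.sum_comm]
      apply Finset.sum_congr rfl
      intro u _
      apply Finset.sum_congr rfl
      intro v _
      simp [G.adj_comm]
    have h2 : ∑ v ∈ A, ((G.neighborFinset v ∩ W).card : ℝ) ≤ D * W.card := by
      have : ∑ v ∈ A, ((G.neighborFinset v ∩ W).card : ℝ)
          = ∑ u ∈ W, ((G.neighborFinset u ∩ A).card : ℝ) := by
        exact_mod_cast congrArg (fun x : ℕ => (x : ℝ)) hswap
      rw [this]
      calc ∑ u ∈ W, ((G.neighborFinset u ∩ A).card : ℝ)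
          ≤ ∑ u ∈ W, D := Finset.sum_le_sum (fun u hu => hdeg u (hWA hu))
        _ = D * W.card := by rw [Finset.sum_const, nsmul_eq_mul, mul_comm]
    calc ∑ v ∈ A, g v W
        = ∑ v ∈ A, (if v ∈ W then D else 0) + ∑ v ∈ A, ((G.neighborFinset v ∩ W).card : ℝ) := by
          rw [hgdef, ← Finset.sum_add_distrib]
      _ ≤ D * W.card + D * W.card := by rw [h1]; linarith
      _ = 2 * D * W.card := by ring
  -- COMBINE
  have hdouble : (I.card : ℝ) * ((A.card : ℝ) * L) ≤ ∑ W ∈ I, 2 * D * W.card := by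
    calc (I.card : ℝ) * ((A.card : ℝ) * L)
        = ∑ v ∈ A, (I.card : ℝ) * L := by rw [Finset.sum_const, nsmul_eq_mul]; ring
      _ ≤ ∑ v ∈ A, ∑ W ∈ I, g v W := Finset.sum_le_sum hlower
      _ = ∑ W ∈ I, ∑ v ∈ A, g v W := Finset.sum_comm
      _ ≤ ∑ W ∈ I, 2 * D * W.card := Finset.sum_le_sum hupper
  have hexists : ∃ W ∈ I, (A.card : ℝ) * L ≤ 2 * D * W.card := by
    by_contra hcon
    push_neg at hcon
    have hlt : ∑ W ∈ I, 2 * D * (W.card : ℝ)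
        < ∑ W ∈ I, (A.card : ℝ) * L := Finset.sum_lt_sum_of_nonempty hIne hcon
    rw [Finset.sum_const, nsmul_eq_mul] at hlt
    nlinarith [hdouble]
  obtain ⟨W, hWI, hWbd⟩ := hexists
  obtain ⟨hWA, hWind⟩ := (hImem W).mp hWI
  refine ⟨W, hWA, hWind, ?_⟩
  rw [hLdef] at hWbd
  rw [div_le_iff₀ (by positivity)]
  nlinarith [hWbd]

lemma card_as_sum {V : Type} [Fintype V] (S : Finset V) :
    ((S.card : ℕ) : ℝ) = ∑ x ∈ Finset.univ, (if ({x} : Finset V) ⊆ S then (1:ℝ) else 0) := by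
  simp only [Finset.singleton_subset_iff]
  rw [Finset.sum_boole]
  congr 1
  rw [Finset.filter_mem_eq_inter, Finset.univ_inter]


set_option maxHeartbeats 2000000 in
/-- For every constant `ε ∈ (0,3)` there exist `c > 0` and `d₀` such that for `d > d₀`,
every `n`-vertex graph with maximum degree at most `d` and at most `n·d^(2-ε)` triangles
has an independent set of size at least `c·(n/d)·log d`. -/
theorem indep_set_of_few_triangles (ε : ℝ) (hε0 : 0 < ε) (hε3 : ε < 3) :
    ∃ c : ℝ, 0 < c ∧ ∃ d₀ : ℕ,
      ∀ (d : ℕ), d₀ < d →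
      ∀ (V : Type) [Fintype V] (G : SimpleGraph V),
        G.maxDegree ≤ d →
        ((G.cliqueFinset 3).card : ℝ) ≤ (Fintype.card V : ℝ) * (d : ℝ) ^ ((2 : ℝ) - ε) →
        ∃ S : Finset V,
          (∀ u ∈ S, ∀ v ∈ S, u ≠ v → ¬ G.Adj u v) ∧
          c * ((Fintype.card V : ℝ) / (d : ℝ)) * Real.log d ≤ (S.card : ℝ) := by
  classical
  set ε' : ℝ := min ε 1 with hε'def
  have hε'0 : 0 < ε' := lt_min hε0 one_pos
  have hε'1 : ε' ≤ 1 := min_le_right _ _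
  have hε'ε : ε' ≤ ε := min_le_left _ _
  refine ⟨ε' / 2048, by positivity, 1, ?_⟩
  intro d hd V _ G hmax htri
  by_cases hn0 : Fintype.card V = 0
  · refine ⟨∅, by simp, ?_⟩
    simp [hn0]
  have hVne : Nonempty V := Fintype.card_pos_iff.mp (Nat.pos_of_ne_zero hn0)
  set n : ℕ := Fintype.card V with hndef
  have hn1 : (1:ℝ) ≤ n := by
    have : 1 ≤ n := Nat.one_le_iff_ne_zero.mpr hn0
    exact_mod_cast this
  have hd2 : 2 ≤ d := hd
  have hd1 : (1:ℝ) ≤ (d:ℝ) := by exact_mod_cast Nat.one_le_of_lt hd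
  have hd0 : (0:ℝ) < (d:ℝ) := lt_of_lt_of_le one_pos hd1
  have hlogd0 : 0 ≤ Real.log d := Real.log_nonneg hd1
  -- the sampling probability
  set p : ℝ := (d:ℝ) ^ ((ε'/2) - 1 : ℝ) / 3 with hpdef
  have hp0 : 0 < p := by
    rw [hpdef]; positivity
  have hple : p ≤ 1/3 := by
    rw [hpdef]
    have : (d:ℝ) ^ ((ε'/2) - 1 : ℝ) ≤ 1 :=
      Real.rpow_le_one_of_one_le_of_nonpos hd1 (by linarith)
    linarith
  have hp1 : p < 1 := by linarith
  have hpd : p * d = (d:ℝ) ^ (ε'/2 : ℝ) / 3 := by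
    rw [hpdef, div_mul_eq_mul_div]
    congr 1
    rw [Real.rpow_sub hd0, Real.rpow_one, div_mul_cancel₀ _ (ne_of_gt hd0)]
  have hpd1 : (1:ℝ)/3 ≤ p * d := by
    rw [hpd]
    have : (1:ℝ) ≤ (d:ℝ) ^ (ε'/2 : ℝ) := Real.one_le_rpow hd1 (by positivity)
    linarith
  have hpsq : p ^ 2 * (d:ℝ) ^ ((2:ℝ) - ε') = 1/9 := by
    rw [hpdef, div_pow, ← Real.rpow_natCast ((d:ℝ) ^ ((ε'/2) - 1 : ℝ)) 2,
      ← Real.rpow_mul (le_of_lt hd0)]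
    rw [div_mul_eq_mul_div, ← Real.rpow_add hd0]
    norm_num
    rw [show ((ε'/2) - 1) * 2 + (2 - ε') = 0 by ring, Real.rpow_zero]
  -- triangle count bound
  have htri' : ((G.cliqueFinset 3).card : ℝ) ≤ (n:ℝ) * (d:ℝ) ^ ((2:ℝ) - ε') := by
    refine le_trans htri ?_
    have : (d:ℝ) ^ ((2:ℝ) - ε) ≤ (d:ℝ) ^ ((2:ℝ) - ε') :=
      Real.rpow_le_rpow_of_exponent_le hd1 (by linarith)
    have hn0' : (0:ℝ) ≤ n := by positivity
    exact mul_le_mul_of_nonneg_left this hn0'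
  -- weighted counting
  set w : Finset V → ℝ := fun S => p ^ S.card * (1-p) ^ (n - S.card) with hwdef
  have hw0 : ∀ S, 0 ≤ w S := by
    intro S; rw [hwdef]; have : 0 ≤ 1 - p := by linarith
    positivity
  have hw1 : ∑ S ∈ (Finset.univ : Finset V).powerset, w S = 1 := by
    rw [hwdef]
    have := sum_pow_powerset p (1-p) (Finset.univ : Finset V)
    rw [Finset.card_univ] at this
    simp only [← hndef] at this
    rw [this]
    norm_num
  set tri : Finset V → ℕ := fun S => ((G.cliqueFinset 3).filter (fun t => t ⊆ S)).card
    with htridef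
  set ET : Finset (V × V) :=
    (Finset.univ ×ˢ Finset.univ).filter (fun z : V × V => G.Adj z.1 z.2) with hETdef
  set eo : Finset V → ℕ := fun S => (ET.filter (fun z => z.1 ∈ S ∧ z.2 ∈ S)).card with heodef
  have hpq : p + (1-p) = 1 := by ring
  -- E[card]
  have hEcard : ∑ S ∈ (Finset.univ : Finset V).powerset, w S * S.card = p * n := by
    have h := exp_count p (1-p) hpq (Finset.univ : Finset V) (fun x => {x})
    rw [← hndef] at h
    simp only [Finset.card_singleton, pow_one, Finset.sum_const, Finset.card_univ,
      nsmul_eq_mul, ← hndef] at h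
    rw [mul_comm p (n:ℝ), ← h]
    apply Finset.sum_congr rfl
    intro S _
    rw [hwdef]
    simp only []
    rw [card_as_sum S]
  -- E[tri]
  have hEtri : ∑ S ∈ (Finset.univ : Finset V).powerset, w S * tri S
      = ((G.cliqueFinset 3).card : ℝ) * p ^ 3 := by
    have h := exp_count p (1-p) hpq (G.cliqueFinset 3) (fun t => t)
    have h2 : ∀ t ∈ G.cliqueFinset 3, p ^ t.card = p ^ 3 := by
      intro t ht
      rw [(SimpleGraph.mem_cliqueFinset_iff.mp ht).2]
    rw [Finset.sum_congr rfl h2, Finset.sum_const, nsmul_eq_mul] at h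
    rw [← hndef] at h
    rw [← h]
    apply Finset.sum_congr rfl
    intro S _
    rw [hwdef]
    congr 1
    show ((((G.cliqueFinset 3).filter (fun t => t ⊆ S)).card : ℕ) : ℝ) = _
    rw [Finset.card_filter]
    push_cast
    rfl
  -- E[eo]
  have hEeo : ∑ S ∈ (Finset.univ : Finset V).powerset, w S * eo S
      = (ET.card : ℝ) * p ^ 2 := by
    have h := exp_count p (1-p) hpq ET (fun z => {z.1, z.2})
    have h2 : ∀ z ∈ ET, p ^ ({z.1, z.2} : Finset V).card = p ^ 2 := by
      intro z hz
      have hadj : G.Adj z.1 z.2 := by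
        rw [hETdef] at hz
        exact (Finset.mem_filter.mp hz).2
      rw [Finset.card_pair (G.ne_of_adj hadj)]
    rw [Finset.sum_congr rfl h2, Finset.sum_const, nsmul_eq_mul] at h
    rw [← hndef] at h
    rw [← h]
    apply Finset.sum_congr rfl
    intro S _
    rw [hwdef]
    congr 1
    show (((ET.filter (fun z => z.1 ∈ S ∧ z.2 ∈ S)).card : ℕ) : ℝ) = _
    rw [Finset.card_filter]
    push_cast
    apply Finset.sum_congr rfl
    intro z _
    congr 1
    · simp [Finset.insert_subset_iff, Finset.singleton_subset_iff]
  -- bound on ET.card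
  have hETbd : (ET.card : ℝ) ≤ (n:ℝ) * d := by
    have h1 : ET.card = ∑ u ∈ Finset.univ, (G.neighborFinset u).card := by
      rw [hETdef, Finset.card_filter, Finset.sum_product]
      apply Finset.sum_congr rfl
      intro u _
      rw [← Finset.inter_univ (G.neighborFinset u), card_nbr_inter]
    have h2 : ∑ u ∈ (Finset.univ : Finset V), (G.neighborFinset u).card ≤ n * d := by
      calc ∑ u ∈ (Finset.univ : Finset V), (G.neighborFinset u).card
          ≤ ∑ _u ∈ (Finset.univ : Finset V), d := by
            apply Finset.sum_le_sum
            intro u _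
            rw [SimpleGraph.card_neighborFinset_eq_degree]
            exact le_trans (G.degree_le_maxDegree u) hmax
        _ = n * d := by rw [Finset.sum_const, smul_eq_mul, Finset.card_univ]
    rw [h1]
    exact_mod_cast h2
  -- Φ and its expectation
  set Φ : Finset V → ℝ := fun S => (S.card : ℝ) - 2 * tri S - eo S / (4 * p * d) with hΦdef
  have hpd4 : (0:ℝ) < 4 * p * d := by positivity
  have hEΦ : (19/36) * (p * n) ≤ ∑ S ∈ (Finset.univ : Finset V).powerset, w S * Φ S := by
    have e1 : ∀ S : Finset V, w S * Φ S
        = w S * S.card - 2*(w S * tri S) - (w S * eo S)/(4*p*d) := by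
      intro S; rw [hΦdef]; ring
    rw [Finset.sum_congr rfl (fun S _ => e1 S)]
    rw [Finset.sum_sub_distrib, Finset.sum_sub_distrib, ← Finset.mul_sum, ← Finset.sum_div]
    rw [hEcard, hEtri, hEeo]
    have hb1 : ((G.cliqueFinset 3).card : ℝ) * p^3 ≤ (p*n)/9 := by
      calc ((G.cliqueFinset 3).card : ℝ) * p^3
          ≤ ((n:ℝ) * (d:ℝ)^((2:ℝ) - ε')) * p^3 :=
            mul_le_mul_of_nonneg_right htri' (by positivity)
        _ = ((n:ℝ)*p) * (p^2 * (d:ℝ)^((2:ℝ) - ε')) := by ring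
        _ = (p*n)/9 := by rw [hpsq]; ring
    have hb2 : (ET.card:ℝ)*p^2/(4*p*d) ≤ (p*n)/4 := by
      have h1 : (ET.card:ℝ)*p^2 ≤ ((n:ℝ)*d)*p^2 :=
        mul_le_mul_of_nonneg_right hETbd (by positivity)
      calc (ET.card:ℝ)*p^2/(4*p*d) ≤ ((n:ℝ)*d)*p^2/(4*p*d) := by gcongr
        _ = (p*n)/4 := by field_simp
    linarith
  -- a good sample S
  have hexS : ∃ S : Finset V, (p * n)/2 ≤ Φ S := by
    by_contra hcon
    push_neg at hcon
    have hub : ∑ S ∈ (Finset.univ : Finset V).powerset, w S * Φ S ≤ (p*n)/2 := by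
      calc ∑ S ∈ (Finset.univ : Finset V).powerset, w S * Φ S
          ≤ ∑ S ∈ (Finset.univ : Finset V).powerset, w S * ((p*n)/2) :=
            Finset.sum_le_sum (fun S _ =>
              mul_le_mul_of_nonneg_left (le_of_lt (hcon S)) (hw0 S))
        _ = (p*n)/2 := by rw [← Finset.sum_mul, hw1, one_mul]
    have hpn : 0 < p*(n:ℝ) := by positivity
    nlinarith
  obtain ⟨S, hΦS⟩ := hexS
  have hΦS2 : (p*(n:ℝ))/2 ≤ (S.card:ℝ) - 2 * tri S - eo S / (4 * p * d) := hΦS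
  -- local edge counting
  have hedge_count : ∀ A' : Finset V, A' ⊆ S →
      ∑ v ∈ A', (G.neighborFinset v ∩ A').card ≤ eo S := by
    intro A' hA'
    have lhs : ∑ v ∈ A', (G.neighborFinset v ∩ A').card
        = ∑ v ∈ A', ∑ u ∈ A', if G.Adj v u then 1 else 0 :=
      Finset.sum_congr rfl (fun v _ => card_nbr_inter G v A')
    have rhs : eo S = ∑ v ∈ (Finset.univ : Finset V), ∑ u ∈ (Finset.univ : Finset V),
        if (G.Adj v u ∧ (v ∈ S ∧ u ∈ S)) then 1 else 0 := by
      show (ET.filter _).card = _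
      rw [hETdef, Finset.filter_filter, Finset.card_filter, Finset.sum_product]
    rw [lhs, rhs]
    calc ∑ v ∈ A', ∑ u ∈ A', (if G.Adj v u then 1 else 0)
        ≤ ∑ v ∈ A', ∑ u ∈ (Finset.univ : Finset V),
            (if (G.Adj v u ∧ (v ∈ S ∧ u ∈ S)) then 1 else 0) := by
          apply Finset.sum_le_sum
          intro v hv
          calc ∑ u ∈ A', (if G.Adj v u then 1 else 0)
              ≤ ∑ u ∈ A', (if (G.Adj v u ∧ (v ∈ S ∧ u ∈ S)) then 1 else 0) := by
                apply Finset.sum_le_sum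
                intro u hu
                by_cases h : G.Adj v u
                · rw [if_pos h, if_pos ⟨h, hA' hv, hA' hu⟩]
                · rw [if_neg h]; exact Nat.zero_le _
            _ ≤ ∑ u ∈ (Finset.univ : Finset V),
                (if (G.Adj v u ∧ (v ∈ S ∧ u ∈ S)) then 1 else 0) :=
                Finset.sum_le_sum_of_subset (Finset.subset_univ A')
      _ ≤ ∑ v ∈ (Finset.univ : Finset V), ∑ u ∈ (Finset.univ : Finset V),
            (if (G.Adj v u ∧ (v ∈ S ∧ u ∈ S)) then 1 else 0) :=
          Finset.sum_le_sum_of_subset (Finset.subset_univ A')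
  -- delete one vertex from each triangle inside S
  set pick : Finset V → V := fun t => if h : t.Nonempty then h.choose else Classical.arbitrary V
    with hpickdef
  have hpick : ∀ t : Finset V, t.Nonempty → pick t ∈ t := by
    intro t ht
    rw [hpickdef]
    simp only [dif_pos ht]
    exact ht.choose_spec
  set trisS : Finset (Finset V) := (G.cliqueFinset 3).filter (fun t => t ⊆ S) with htrisdef
  have htrisS_ne : ∀ t ∈ trisS, t.Nonempty := by
    intro t ht
    rw [htrisdef] at ht
    have h3 := (SimpleGraph.mem_cliqueFinset_iff.mp (Finset.mem_filter.mp ht).1).2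
    exact Finset.card_pos.mp (by rw [h3]; norm_num)
  set S' : Finset V := S \ trisS.image pick with hS'def
  have hS'sub : S' ⊆ S := Finset.sdiff_subset
  have hS'card : (S.card : ℝ) - tri S ≤ S'.card := by
    have h1 : S.card ≤ S'.card + (trisS.image pick).card := by
      calc S.card ≤ (S' ∪ trisS.image pick).card := Finset.card_le_card (by
            intro x hx
            by_cases h : x ∈ trisS.image pick
            · exact Finset.mem_union_right _ h
            · exact Finset.mem_union_left _ (Finset.mem_sdiff.mpr ⟨hx, h⟩))
        _ ≤ S'.card + (trisS.image pick).card := Finset.card_union_le _ _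
    have h2 : (trisS.image pick).card ≤ tri S := Finset.card_image_le
    have h3 : S.card ≤ S'.card + tri S := le_trans h1 (by omega)
    have h4 : ((S.card : ℕ) : ℝ) ≤ ((S'.card + tri S : ℕ) : ℝ) := by exact_mod_cast h3
    push_cast at h4
    linarith
  have hS'tf : ∀ t ∈ G.cliqueFinset 3, ¬ t ⊆ S' := by
    intro t ht hsub
    have htS : t ⊆ S := hsub.trans hS'sub
    have htm : t ∈ trisS := by rw [htrisdef]; exact Finset.mem_filter.mpr ⟨ht, htS⟩
    have hpt : pick t ∈ t := hpick t (htrisS_ne t htm)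
    have h1 : pick t ∈ S' := hsub hpt
    have h2 : pick t ∈ trisS.image pick := Finset.mem_image_of_mem pick htm
    rw [hS'def] at h1
    exact (Finset.mem_sdiff.mp h1).2 h2
  -- remove high-degree vertices
  set S'' : Finset V := S'.filter (fun v => ((G.neighborFinset v ∩ S').card : ℝ) ≤ 16*(p*d))
    with hS''def
  have hS''sub : S'' ⊆ S' := Finset.filter_subset _ _
  have ht0 : (0:ℝ) ≤ tri S := Nat.cast_nonneg _
  have he0 : (0:ℝ) ≤ eo S := Nat.cast_nonneg _
  have hm' : (p*(n:ℝ))/2 ≤ (S'.card:ℝ) := by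
    have hdivnn : 0 ≤ (eo S:ℝ) / (4*p*d) := div_nonneg (Nat.cast_nonneg _) (le_of_lt hpd4)
    linarith [hS'card, hΦS2, ht0, hdivnn]
  have heo8 : (eo S : ℝ) ≤ 8*(p*d)*S'.card := by
    have hpn0 : 0 ≤ p*(n:ℝ) := by positivity
    have e1 : (eo S:ℝ)/(4*p*d) ≤ 2*((S.card:ℝ) - tri S) := by linarith [hΦS2, ht0]
    rw [div_le_iff₀ hpd4] at e1
    have e2 : 2*((S.card:ℝ) - tri S)*(4*p*d) = 8*(p*d)*((S.card:ℝ) - tri S) := by ring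
    have hpdnn : (0:ℝ) ≤ 8*(p*d) := by positivity
    have e3 : 8*(p*d)*((S.card:ℝ) - tri S) ≤ 8*(p*d)*(S'.card:ℝ) :=
      mul_le_mul_of_nonneg_left hS'card hpdnn
    linarith
  set Bad : Finset V :=
    S'.filter (fun v => ¬ ((G.neighborFinset v ∩ S').card : ℝ) ≤ 16*(p*d)) with hBaddef
  have hsplit : S''.card + Bad.card = S'.card := by
    rw [hS''def, hBaddef]
    exact Finset.card_filter_add_card_filter_not _
  have hBadlb : (Bad.card:ℝ) * (16*(p*d)) ≤ ∑ v ∈ Bad, ((G.neighborFinset v ∩ S').card : ℝ) := by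
    calc (Bad.card:ℝ)*(16*(p*d)) = ∑ _v ∈ Bad, 16*(p*d) := by
          rw [Finset.sum_const, nsmul_eq_mul]
      _ ≤ ∑ v ∈ Bad, ((G.neighborFinset v ∩ S').card : ℝ) := by
          apply Finset.sum_le_sum
          intro v hv
          have := (Finset.mem_filter.mp (hBaddef ▸ hv)).2
          exact le_of_lt (not_le.mp this)
  have hBadub : ∑ v ∈ Bad, ((G.neighborFinset v ∩ S').card : ℝ) ≤ (eo S : ℝ) := by
    have h1 : ∑ v ∈ Bad, (G.neighborFinset v ∩ S').card
        ≤ ∑ v ∈ S', (G.neighborFinset v ∩ S').card :=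
      Finset.sum_le_sum_of_subset (Finset.filter_subset _ _)
    have h2 := hedge_count S' hS'sub
    exact_mod_cast le_trans h1 h2
  have hBadcard : (Bad.card:ℝ) ≤ (S'.card:ℝ)/2 := by
    have h8 : (0:ℝ) < 8*(p*d) := by positivity
    have key : (Bad.card:ℝ) * (16*(p*d)) ≤ 8*(p*d)*S'.card :=
      le_trans hBadlb (le_trans hBadub heo8)
    have e : (Bad.card:ℝ)*(16*(p*d)) = 8*(p*d)*(2*(Bad.card:ℝ)) := by ring
    rw [e] at key
    have h2 := le_of_mul_le_mul_left key h8
    linarith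
  have hm'' : (p*(n:ℝ))/4 ≤ (S''.card:ℝ) := by
    have hc : ((S''.card + Bad.card : ℕ):ℝ) = ((S'.card:ℕ):ℝ) := by exact_mod_cast hsplit
    push_cast at hc
    linarith
  have hdeg'' : ∀ v ∈ S'', ((G.neighborFinset v ∩ S'').card : ℝ) ≤ 16*(p*d) := by
    intro v hv
    have h1 : (G.neighborFinset v ∩ S'').card ≤ (G.neighborFinset v ∩ S').card :=
      Finset.card_le_card (Finset.inter_subset_inter (Finset.Subset.refl _) hS''sub)
    have h2 := (Finset.mem_filter.mp (hS''def ▸ hv)).2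
    calc ((G.neighborFinset v ∩ S'').card : ℝ) ≤ ((G.neighborFinset v ∩ S').card : ℝ) := by
          exact_mod_cast h1
      _ ≤ 16*(p*d) := h2
  have htf'' : ∀ t ∈ G.cliqueFinset 3, ¬ t ⊆ S'' :=
    fun t ht hsub => hS'tf t ht (hsub.trans hS''sub)
  have hD1 : (1:ℝ) ≤ 16*(p*d) := by linarith [hpd1]
  obtain ⟨W, hWsub, hWind, hWcard⟩ := shearer G S'' (16*(p*d)) hD1 htf'' hdeg''
  refine ⟨W, hWind, ?_⟩
  -- final numeric chase
  have hlog2pos : 0 < Real.log 2 := Real.log_pos one_lt_two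
  have hrpow0 : (0:ℝ) < (d:ℝ)^(ε'/2:ℝ) := Real.rpow_pos_of_pos hd0 _
  have hlogb : (ε'/2) * Real.log d ≤ Real.logb 2 (16*(p*d)) := by
    have h1 : (d:ℝ)^(ε'/2:ℝ) ≤ 16*(p*d) := by
      rw [hpd]; linarith [hrpow0]
    have h2 : Real.logb 2 ((d:ℝ)^(ε'/2:ℝ)) ≤ Real.logb 2 (16*(p*d)) :=
      Real.logb_le_logb_of_le one_lt_two hrpow0 h1
    have h3 : Real.logb 2 ((d:ℝ)^(ε'/2:ℝ)) = (ε'/2) * Real.log d / Real.log 2 := by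
      rw [Real.logb, Real.log_rpow hd0]
    have hlog2le : Real.log 2 ≤ 1 := by
      have := Real.log_le_sub_one_of_pos (by norm_num : (0:ℝ) < 2); linarith
    have h4 : (ε'/2) * Real.log d ≤ (ε'/2) * Real.log d / Real.log 2 := by
      rw [le_div_iff₀ hlog2pos]
      exact mul_le_of_le_one_right (mul_nonneg (by linarith) hlogd0) hlog2le
    rw [h3] at h2
    linarith
  have hlogb0' : 0 ≤ Real.logb 2 (16*(p*d)) := Real.logb_nonneg one_lt_two hD1
  have hdenom : (0:ℝ) < 16*(16*(p*d)) := by positivity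
  have hstep1 : (p*(n:ℝ)/4) * ((ε'/2)*Real.log d) / (16*(16*(p*d)))
      ≤ (S''.card:ℝ) * Real.logb 2 (16*(p*d)) / (16*(16*(p*d))) := by
    have hnn1 : (0:ℝ) ≤ p*(n:ℝ)/4 := by positivity
    have hnn2 : (0:ℝ) ≤ (ε'/2)*Real.log d := by
      apply mul_nonneg _ hlogd0
      linarith
    rw [div_le_div_iff_of_pos_right hdenom]
    calc (p*(n:ℝ)/4) * ((ε'/2)*Real.log d)
        ≤ (S''.card:ℝ) * ((ε'/2)*Real.log d) := mul_le_mul_of_nonneg_right hm'' hnn2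
      _ ≤ (S''.card:ℝ) * Real.logb 2 (16*(p*d)) :=
          mul_le_mul_of_nonneg_left hlogb (Nat.cast_nonneg _)
  have heq : (p*(n:ℝ)/4) * ((ε'/2)*Real.log d) / (16*(16*(p*d)))
      = (ε'/2048) * ((n:ℝ)/d) * Real.log d := by
    field_simp
    ring
  calc (ε'/2048) * ((n:ℝ)/d) * Real.log d
      = (p*(n:ℝ)/4) * ((ε'/2)*Real.log d) / (16*(16*(p*d))) := heq.symm
    _ ≤ (S''.card:ℝ) * Real.logb 2 (16*(p*d)) / (16*(16*(p*d))) := hstep1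
    _ ≤ W.card := hWcard
end

section
/- Every n-vertex d-regular simple graph (with d ≥ 1) contains a matching of size at least d·n/(2d+2), and in particular of size at least n/4. -/
open Finset

attribute [local instance] Classical.propDecidable
set_option linter.unusedSectionVars false

namespace MatchReg

variable {V : Type} [Fintype V]

/-- vertices of a `Sym2` as a finset -/
noncomputable def everts (e : Sym2 V) : Finset V := Finset.univ.filter (· ∈ e)

lemma mem_everts {e : Sym2 V} {v : V} : v ∈ everts e ↔ v ∈ e := by
  simp [everts]

lemma everts_card {a b : V} (h : a ≠ b) : (everts (s(a, b))).card = 2 := by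
  have : everts (s(a,b)) = {a, b} := by
    ext v; simp [everts, Sym2.mem_iff]
  rw [this, Finset.card_insert_of_notMem (by simpa using h), Finset.card_singleton]

/-- connectivity within a vertex finset -/
def Rel (G : SimpleGraph V) (u : Finset V) (a b : V) : Prop :=
  Relation.ReflTransGen (fun x y => x ∈ u ∧ y ∈ u ∧ G.Adj x y) a b

variable {G : SimpleGraph V}

lemma Rel.rfl {u : Finset V} {a : V} : Rel G u a a := Relation.ReflTransGen.refl

lemma Rel.symm {u : Finset V} {a b : V} (h : Rel G u a b) : Rel G u b a := by
  refine @Std.Symm.symm _ _ (@Relation.ReflTransGen.stdSymm _ _ ⟨?_⟩) _ _ h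
  intro x y ⟨hx, hy, hadj⟩
  exact ⟨hy, hx, hadj.symm⟩

lemma Rel.trans {u : Finset V} {a b c : V} (h1 : Rel G u a b) (h2 : Rel G u b c) :
    Rel G u a c := Relation.ReflTransGen.trans h1 h2

lemma Rel.mono {u u' : Finset V} (hsub : u ⊆ u') {a b : V} (h : Rel G u a b) :
    Rel G u' a b := by
  refine Relation.ReflTransGen.mono ?_ a b h
  intro x y ⟨hx, hy, hadj⟩
  exact ⟨hsub hx, hsub hy, hadj⟩

lemma Rel.step {u : Finset V} {a b : V} (ha : a ∈ u) (hb : b ∈ u) (h : G.Adj a b) :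
    Rel G u a b := Relation.ReflTransGen.single ⟨ha, hb, h⟩

/-- connected component of `v` within `u` -/
noncomputable def comp (G : SimpleGraph V) (u : Finset V) (v : V) : Finset V :=
  u.filter (Rel G u v)

lemma mem_comp {u : Finset V} {v w : V} : w ∈ comp G u v ↔ w ∈ u ∧ Rel G u v w := by
  simp [comp]

lemma comp_subset {u : Finset V} {v : V} : comp G u v ⊆ u := Finset.filter_subset _ _

lemma self_mem_comp {u : Finset V} {v : V} (hv : v ∈ u) : v ∈ comp G u v :=
  mem_comp.2 ⟨hv, Rel.rfl⟩

lemma comp_eq_of_rel {u : Finset V} {v w : V} (h : Rel G u v w) :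
    comp G u v = comp G u w := by
  ext x
  simp only [mem_comp]
  exact ⟨fun ⟨hx, hr⟩ => ⟨hx, h.symm.trans hr⟩, fun ⟨hx, hr⟩ => ⟨hx, h.trans hr⟩⟩

/-- adjacency stays within a component -/
lemma adj_mem_comp {u : Finset V} {v a b : V} (ha : a ∈ comp G u v) (hb : b ∈ u)
    (hadj : G.Adj a b) : b ∈ comp G u v := by
  obtain ⟨hau, hr⟩ := mem_comp.1 ha
  exact mem_comp.2 ⟨hb, hr.trans (Rel.step hau hb hadj)⟩

end MatchReg

namespace MatchReg
variable {V : Type} [Fintype V] {G : SimpleGraph V}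

/-- the set of connected components of `u` -/
noncomputable def comps (G : SimpleGraph V) (u : Finset V) : Finset (Finset V) :=
  u.image (comp G u)

lemma mem_comps {u c : Finset V} :
    c ∈ comps G u ↔ ∃ v ∈ u, comp G u v = c := by simp [comps]

lemma comps_nonempty {u c : Finset V} (hc : c ∈ comps G u) : c.Nonempty := by
  obtain ⟨v, hv, rfl⟩ := mem_comps.1 hc
  exact ⟨v, self_mem_comp hv⟩

lemma comps_subset {u c : Finset V} (hc : c ∈ comps G u) : c ⊆ u := by
  obtain ⟨v, hv, rfl⟩ := mem_comps.1 hc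
  exact comp_subset

lemma comp_eq_comp_of_mem {u : Finset V} {v w : V} (h : w ∈ comp G u v) :
    comp G u w = comp G u v := (comp_eq_of_rel (mem_comp.1 h).2).symm

lemma comps_disjoint {u : Finset V} {c d : Finset V} (hc : c ∈ comps G u)
    (hd : d ∈ comps G u) (hne : c ≠ d) : Disjoint c d := by
  obtain ⟨v, hv, rfl⟩ := mem_comps.1 hc
  obtain ⟨w, hw, rfl⟩ := mem_comps.1 hd
  rw [Finset.disjoint_left]
  intro x hxc hxd
  exact hne ((comp_eq_comp_of_mem hxc).symm.trans (comp_eq_comp_of_mem hxd))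

lemma comps_biUnion {u : Finset V} : (comps G u).biUnion id = u := by
  ext x
  simp only [Finset.mem_biUnion, id, mem_comps]
  constructor
  · rintro ⟨c, ⟨v, hv, rfl⟩, hx⟩; exact comp_subset hx
  · intro hx; exact ⟨comp G u x, ⟨x, hx, rfl⟩, self_mem_comp hx⟩

lemma sum_comps_card {u : Finset V} : ∑ c ∈ comps G u, c.card = u.card := by
  have h := Finset.card_biUnion (s := comps G u) (t := id)
    (fun c hc d hd hne => comps_disjoint hc hd hne)
  rw [comps_biUnion] at h
  simpa using h.symm

/-- number of odd components -/
noncomputable def oddCnt (G : SimpleGraph V) (u : Finset V) : ℕ :=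
  ((comps G u).filter (fun c => Odd c.card)).card

lemma oddCnt_parity {u : Finset V} : oddCnt G u % 2 = u.card % 2 := by
  have h1 : u.card % 2 = (∑ c ∈ comps G u, c.card) % 2 := by rw [sum_comps_card]
  rw [h1, Finset.sum_nat_mod]
  have h2 : ∀ c ∈ comps G u, c.card % 2 = if Odd c.card then 1 else 0 := by
    intro c _
    by_cases h : Odd c.card
    · simp [h, Nat.odd_iff.1 h]
    · simp [h, Nat.even_iff.1 (Nat.not_odd_iff_even.1 h)]
  rw [Finset.sum_congr rfl h2]
  rw [Finset.sum_boole]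
  simp [oddCnt]

lemma oddCnt_pos_of_odd {u : Finset V} (h : Odd u.card) : 1 ≤ oddCnt G u := by
  by_contra hc
  push_neg at hc
  interval_cases h' : oddCnt G u
  have := oddCnt_parity (G := G) (u := u)
  rw [h'] at this
  rw [Nat.odd_iff] at h
  omega

end MatchReg

namespace MatchReg
variable {V : Type} [Fintype V] {G : SimpleGraph V}

/-- `w` is a union of components of `u`: closed under adjacency inside `u`. -/
def Closed (G : SimpleGraph V) (u w : Finset V) : Prop :=
  w ⊆ u ∧ ∀ a ∈ w, ∀ b ∈ u, G.Adj a b → b ∈ w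

lemma closed_comp {u : Finset V} {v : V} : Closed G u (comp G u v) :=
  ⟨comp_subset, fun a ha b hb hadj => adj_mem_comp ha hb hadj⟩

lemma closed_sdiff {u w : Finset V} (h : Closed G u w) : Closed G u (u \ w) := by
  refine ⟨Finset.sdiff_subset, fun a ha b hb hadj => ?_⟩
  rw [Finset.mem_sdiff] at ha ⊢
  refine ⟨hb, fun hbw => ha.2 (h.2 b hbw a ha.1 hadj.symm)⟩

lemma comp_eq_of_closed {u w : Finset V} (h : Closed G u w) {v : V} (hv : v ∈ w) :
    comp G w v = comp G u v := by
  apply Finset.Subset.antisymm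
  · intro x hx
    obtain ⟨hxw, hr⟩ := mem_comp.1 hx
    exact mem_comp.2 ⟨h.1 hxw, hr.mono h.1⟩
  · suffices hs : ∀ x, Rel G u v x → x ∈ w ∧ Rel G w v x by
      intro x hx
      exact mem_comp.2 (hs x (mem_comp.1 hx).2)
    intro x hr
    induction hr with
    | refl => exact ⟨hv, Rel.rfl⟩
    | tail hab hbc ih =>
      obtain ⟨hbu, hcu, hadj⟩ := hbc
      obtain ⟨hbw, hrw⟩ := ih
      have hcw : _ ∈ w := h.2 _ hbw _ hcu hadj
      exact ⟨hcw, hrw.trans (Rel.step hbw hcw hadj)⟩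

lemma comps_split {u w : Finset V} (h : Closed G u w) :
    comps G u = comps G w ∪ comps G (u \ w) := by
  have h' := closed_sdiff h
  ext c
  simp only [Finset.mem_union, mem_comps]
  constructor
  · rintro ⟨v, hv, rfl⟩
    by_cases hvw : v ∈ w
    · exact Or.inl ⟨v, hvw, comp_eq_of_closed h hvw⟩
    · exact Or.inr ⟨v, Finset.mem_sdiff.2 ⟨hv, hvw⟩,
        comp_eq_of_closed h' (Finset.mem_sdiff.2 ⟨hv, hvw⟩)⟩
  · rintro (⟨v, hv, rfl⟩ | ⟨v, hv, rfl⟩)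
    · exact ⟨v, h.1 hv, (comp_eq_of_closed h hv).symm⟩
    · exact ⟨v, (Finset.mem_sdiff.1 hv).1, (comp_eq_of_closed h' hv).symm⟩

lemma comps_disjoint_split {u w : Finset V} (h : Closed G u w) :
    Disjoint (comps G w) (comps G (u \ w)) := by
  rw [Finset.disjoint_left]
  intro c hc1 hc2
  obtain ⟨x, hx⟩ := comps_nonempty hc1
  have h1 := comps_subset hc1 hx
  have h2 := comps_subset hc2 hx
  exact (Finset.mem_sdiff.1 h2).2 h1

lemma oddCnt_split {u w : Finset V} (h : Closed G u w) :
    oddCnt G u = oddCnt G w + oddCnt G (u \ w) := by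
  unfold oddCnt
  rw [comps_split h, Finset.filter_union, Finset.card_union_of_disjoint]
  exact Finset.disjoint_filter_filter (comps_disjoint_split h)

lemma closed_of_mem_comps {u c : Finset V} (hc : c ∈ comps G u) : Closed G u c := by
  obtain ⟨v, hv, rfl⟩ := mem_comps.1 hc
  exact closed_comp

lemma comps_self {u c : Finset V} (hc : c ∈ comps G u) : comps G c = {c} := by
  obtain ⟨v, hv, rfl⟩ := mem_comps.1 hc
  have hcl : Closed G u (comp G u v) := closed_comp
  ext d
  simp only [mem_comps, Finset.mem_singleton]
  constructor
  · rintro ⟨w, hw, rfl⟩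
    rw [comp_eq_of_closed hcl hw]
    exact comp_eq_comp_of_mem hw
  · rintro rfl
    refine ⟨v, self_mem_comp hv, ?_⟩
    rw [comp_eq_of_closed hcl (self_mem_comp hv)]

lemma oddCnt_comp {u c : Finset V} (hc : c ∈ comps G u) :
    oddCnt G c = if Odd c.card then 1 else 0 := by
  unfold oddCnt
  rw [comps_self hc, Finset.filter_singleton]
  by_cases h : Odd c.card <;> simp [h]

lemma oddCnt_sdiff_comp {u c : Finset V} (hc : c ∈ comps G u) (hodd : Odd c.card) :
    oddCnt G u = 1 + oddCnt G (u \ c) := by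
  rw [oddCnt_split (closed_of_mem_comps hc), oddCnt_comp hc, if_pos hodd]

/-- a component stays a component when adding vertices with no edges to it -/
lemma mem_comps_superset {u u' c : Finset V} (hc : c ∈ comps G u) (hsub : u ⊆ u')
    (hno : ∀ a ∈ c, ∀ b ∈ u', b ∉ u → ¬ G.Adj a b) : c ∈ comps G u' := by
  obtain ⟨v, hv, rfl⟩ := mem_comps.1 hc
  have hcl : Closed G u (comp G u v) := closed_comp
  have hcl' : Closed G u' (comp G u v) := by
    refine ⟨fun x hx => hsub (comp_subset hx), fun a ha b hb hadj => ?_⟩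
    by_cases hbu : b ∈ u
    · exact hcl.2 a ha b hbu hadj
    · exact absurd hadj (hno a ha b hb hbu)
  have hvm := self_mem_comp (G := G) (u := u) hv
  refine mem_comps.2 ⟨v, hsub hv, ?_⟩
  rw [← comp_eq_of_closed hcl' hvm, comp_eq_of_closed hcl hvm]

end MatchReg

namespace MatchReg
variable {V : Type} [Fintype V] {G : SimpleGraph V}

/-- `M` is a matching of `G` inside vertex set `u` -/
def IsM (G : SimpleGraph V) (u : Finset V) (M : Finset (Sym2 V)) : Prop :=
  (∀ e ∈ M, e ∈ G.edgeSet) ∧ (∀ e ∈ M, ∀ v ∈ e, v ∈ u) ∧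
  (∀ e ∈ M, ∀ f ∈ M, e ≠ f → ∀ v, v ∈ e → v ∉ f)

lemma IsM_empty {u : Finset V} : IsM G u (∅ : Finset (Sym2 V)) := by
  refine ⟨?_, ?_, ?_⟩ <;> simp

lemma IsM.mono {u u' : Finset V} (hsub : u ⊆ u') {M : Finset (Sym2 V)}
    (h : IsM G u M) : IsM G u' M :=
  ⟨h.1, fun e he v hv => hsub (h.2.1 e he v hv), h.2.2⟩

lemma everts_card_edge {e : Sym2 V} (he : e ∈ G.edgeSet) : (everts e).card = 2 := by
  induction e with
  | _ a b => exact everts_card (G.ne_of_adj he)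

lemma exists_mem_edge {e : Sym2 V} (he : e ∈ G.edgeSet) : ∃ v, v ∈ e := by
  induction e with
  | _ a b => exact ⟨a, Sym2.mem_mk_left a b⟩

lemma IsM.two_mul_card_le {u : Finset V} {M : Finset (Sym2 V)} (h : IsM G u M) :
    2 * M.card ≤ u.card := by
  have hdisj : ∀ e ∈ M, ∀ f ∈ M, e ≠ f → Disjoint (everts e) (everts f) := by
    intro e he f hf hne
    rw [Finset.disjoint_left]
    intro v hv hv'
    exact h.2.2 e he f hf hne v (mem_everts.1 hv) (mem_everts.1 hv')
  have hsub : M.biUnion everts ⊆ u := by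
    intro v hv
    obtain ⟨e, he, hve⟩ := Finset.mem_biUnion.1 hv
    exact h.2.1 e he v (mem_everts.1 hve)
  calc 2 * M.card = ∑ e ∈ M, (everts e).card := by
        rw [Finset.sum_congr rfl (fun e he => everts_card_edge (h.1 e he))]
        simp [mul_comm]
    _ = (M.biUnion everts).card := (Finset.card_biUnion hdisj).symm
    _ ≤ u.card := Finset.card_le_card hsub

lemma IsM_insert_pair {u : Finset V} {M : Finset (Sym2 V)} (h : IsM G u M)
    {a b : V} (hadj : G.Adj a b) (ha : a ∉ u) (hb : b ∉ u) :
    IsM G (insert a (insert b u)) (insert s(a,b) M) ∧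
      (insert s(a,b) M).card = M.card + 1 := by
  have hnm : s(a,b) ∉ M := by
    intro hm
    exact ha (h.2.1 _ hm a (Sym2.mem_mk_left a b))
  constructor
  · refine ⟨?_, ?_, ?_⟩
    · intro e he
      rcases Finset.mem_insert.1 he with rfl | he'
      · exact hadj
      · exact h.1 e he'
    · intro e he v hv
      rcases Finset.mem_insert.1 he with rfl | he'
      · rcases Sym2.mem_iff.1 hv with rfl | rfl
        · exact Finset.mem_insert_self _ _
        · exact Finset.mem_insert_of_mem (Finset.mem_insert_self _ _)
      · exact Finset.mem_insert_of_mem (Finset.mem_insert_of_mem (h.2.1 e he' v hv))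
    · intro e he f hf hne v hve hvf
      rcases Finset.mem_insert.1 he with rfl | he' <;>
        rcases Finset.mem_insert.1 hf with rfl | hf'
      · exact hne rfl
      · have hvu := h.2.1 f hf' v hvf
        rcases Sym2.mem_iff.1 hve with rfl | rfl
        · exact ha hvu
        · exact hb hvu
      · have hvu := h.2.1 e he' v hve
        rcases Sym2.mem_iff.1 hvf with rfl | rfl
        · exact ha hvu
        · exact hb hvu
      · exact h.2.2 e he' f hf' hne v hve hvf
  · rw [Finset.card_insert_of_notMem hnm]

lemma IsM_glue {ι : Type} [DecidableEq ι] {I : Finset ι} {zone : ι → Finset V}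
    {Mf : ι → Finset (Sym2 V)}
    (hz : ∀ i ∈ I, ∀ j ∈ I, i ≠ j → Disjoint (zone i) (zone j))
    (hm : ∀ i ∈ I, IsM G (zone i) (Mf i)) :
    IsM G (I.biUnion zone) (I.biUnion Mf) ∧
      (I.biUnion Mf).card = ∑ i ∈ I, (Mf i).card := by
  have hMdisj : ∀ i ∈ I, ∀ j ∈ I, i ≠ j → Disjoint (Mf i) (Mf j) := by
    intro i hi j hj hne
    rw [Finset.disjoint_left]
    intro e hei hej
    obtain ⟨v, hv⟩ := exists_mem_edge ((hm i hi).1 e hei)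
    have h1 := (hm i hi).2.1 e hei v hv
    have h2 := (hm j hj).2.1 e hej v hv
    exact (Finset.disjoint_left.1 (hz i hi j hj hne)) h1 h2
  refine ⟨⟨?_, ?_, ?_⟩, Finset.card_biUnion hMdisj⟩
  · intro e he
    obtain ⟨i, hi, hei⟩ := Finset.mem_biUnion.1 he
    exact (hm i hi).1 e hei
  · intro e he v hv
    obtain ⟨i, hi, hei⟩ := Finset.mem_biUnion.1 he
    exact Finset.mem_biUnion.2 ⟨i, hi, (hm i hi).2.1 e hei v hv⟩
  · intro e he f hf hne v hve hvf
    obtain ⟨i, hi, hei⟩ := Finset.mem_biUnion.1 he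
    obtain ⟨j, hj, hfj⟩ := Finset.mem_biUnion.1 hf
    by_cases hij : i = j
    · subst hij
      exact (hm i hi).2.2 e hei f hfj hne v hve hvf
    · have h1 := (hm i hi).2.1 e hei v hve
      have h2 := (hm j hj).2.1 f hfj v hvf
      exact (Finset.disjoint_left.1 (hz i hi j hj hij)) h1 h2

/-- removing a subset of one component -/
lemma oddCnt_remove {u c t : Finset V} (hc : c ∈ comps G u) (ht : t ⊆ c) :
    oddCnt G (u \ t) = oddCnt G (c \ t) + oddCnt G (u \ c) := by
  have hcu : c ⊆ u := comps_subset hc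
  have hcl : Closed G u c := closed_of_mem_comps hc
  have hclosed : Closed G (u \ t) (u \ c) := by
    refine ⟨Finset.sdiff_subset_sdiff (le_refl u) ht, ?_⟩
    intro a ha b hb hadj
    rw [Finset.mem_sdiff] at ha hb ⊢
    refine ⟨hb.1, fun hbc => ha.2 (hcl.2 b hbc a ha.1 hadj.symm)⟩
  have hset : (u \ t) \ (u \ c) = c \ t := by
    ext x
    simp only [Finset.mem_sdiff, not_and, not_not]
    constructor
    · rintro ⟨⟨hxu, hxt⟩, h2⟩; exact ⟨h2 hxu, hxt⟩
    · rintro ⟨hxc, hxt⟩; exact ⟨⟨hcu hxc, hxt⟩, fun _ => hxc⟩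
  rw [oddCnt_split hclosed, hset, Nat.add_comm]

end MatchReg

namespace MatchReg
variable {V : Type} [Fintype V]

theorem tutteBerge (G : SimpleGraph V) :
    ∀ s : Finset V, ∀ k : ℕ,
      (∀ t ⊆ s, oddCnt G (s \ t) ≤ t.card + k) →
      ∃ M : Finset (Sym2 V), IsM G s M ∧ s.card ≤ 2 * M.card + k := by
  intro s
  induction s using Finset.strongInduction with
  | _ s IH =>
  intro k hk
  classical
  set val : Finset V → ℤ := fun t => (oddCnt G (s \ t) : ℤ) - t.card with hval
  have hPne : (s.powerset).Nonempty := ⟨∅, Finset.empty_mem_powerset s⟩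
  obtain ⟨t₀, ht₀P, ht₀max⟩ := Finset.exists_max_image s.powerset val hPne
  set A : Finset (Finset V) := s.powerset.filter (fun t => val t₀ ≤ val t) with hA
  have hAne : A.Nonempty := ⟨t₀, by simp [hA, ht₀P, le_refl]⟩
  obtain ⟨T, hTA, hTmax⟩ := Finset.exists_max_image A (fun t => t.card) hAne
  have hTs : T ⊆ s := Finset.mem_powerset.1 (Finset.mem_filter.1 hTA).1
  have hmax : ∀ t ⊆ s, val t ≤ val T := by
    intro t hts
    calc val t ≤ val t₀ := ht₀max t (Finset.mem_powerset.2 hts)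
    _ ≤ val T := (Finset.mem_filter.1 hTA).2
  have hcard : ∀ t ⊆ s, val T ≤ val t → t.card ≤ T.card := by
    intro t hts hv
    apply hTmax
    rw [hA, Finset.mem_filter]
    exact ⟨Finset.mem_powerset.2 hts,
      le_trans ((Finset.mem_filter.1 hTA).2) hv⟩
  have hd0k : val T ≤ (k : ℤ) := by
    have := hk T hTs
    simp only [hval]
    push_cast
    omega
  have hd0nn : (0 : ℤ) ≤ val T := by
    have h0 : val ∅ ≤ val T := hmax ∅ (Finset.empty_subset s)
    have : (0:ℤ) ≤ (oddCnt G (s \ ∅) : ℤ) - (∅ : Finset V).card := by simp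
    calc (0:ℤ) ≤ val ∅ := this
    _ ≤ val T := h0
  -- (a) all components of s \ T are odd
  have hodd : ∀ c ∈ comps G (s \ T), Odd c.card := by
    intro c hc
    by_contra heven
    obtain ⟨x, hx⟩ := comps_nonempty hc
    have hxsT : x ∈ s \ T := comps_subset hc hx
    have hxs : x ∈ s := (Finset.mem_sdiff.1 hxsT).1
    have hxT : x ∉ T := (Finset.mem_sdiff.1 hxsT).2
    have hT's : insert x T ⊆ s := Finset.insert_subset hxs hTs
    have hsd : s \ insert x T = (s \ T) \ {x} := by
      ext a
      simp only [Finset.mem_sdiff, Finset.mem_insert, Finset.mem_singleton]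
      tauto
    have h1 : oddCnt G (s \ insert x T) =
        oddCnt G (c \ {x}) + oddCnt G ((s \ T) \ c) := by
      rw [hsd]
      exact oddCnt_remove hc (Finset.singleton_subset_iff.2 hx)
    have h2 : oddCnt G (s \ T) = oddCnt G c + oddCnt G ((s \ T) \ c) :=
      oddCnt_split (closed_of_mem_comps hc)
    have hc0 : oddCnt G c = 0 := by rw [oddCnt_comp hc, if_neg heven]
    have hcpos : 1 ≤ c.card := Finset.card_pos.2 ⟨x, hx⟩
    have hceven : c.card % 2 = 0 := Nat.even_iff.1 (Nat.not_odd_iff_even.1 heven)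
    have hcx : (c \ {x}).card = c.card - 1 := by
      rw [Finset.sdiff_singleton_eq_erase, Finset.card_erase_of_mem hx]
    have hodd1 : 1 ≤ oddCnt G (c \ {x}) := by
      apply oddCnt_pos_of_odd
      rw [Nat.odd_iff, hcx]
      omega
    have hvt' : val T ≤ val (insert x T) := by
      simp only [hval]
      rw [Finset.card_insert_of_notMem hxT, h1, h2, hc0]
      push_cast
      omega
    have hcT := hcard (insert x T) hT's hvt'
    rw [Finset.card_insert_of_notMem hxT] at hcT
    omega
  -- (b) factor-criticality of components
  have hfc : ∀ c ∈ comps G (s \ T), ∀ v ∈ c,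
      ∃ Mc, IsM G (c \ {v}) Mc ∧ 2 * Mc.card + 1 = c.card := by
    intro c hc v hv
    have hcodd := hodd c hc
    have hcsub : c ⊆ s \ T := comps_subset hc
    have hsubhyp : ∀ t ⊆ c \ {v}, oddCnt G ((c \ {v}) \ t) ≤ t.card + 0 := by
      intro t htc
      by_contra hcon
      push_neg at hcon
      have hsubc : t ⊆ c := htc.trans Finset.sdiff_subset
      have hvt : v ∉ t := fun h => by simpa using htc h
      have hvc : {v} ⊆ c := Finset.singleton_subset_iff.2 hv
      have hcv : (c \ {v}).card = c.card - 1 := by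
        rw [Finset.sdiff_singleton_eq_erase, Finset.card_erase_of_mem hv]
      have hcards : ((c \ {v}) \ t).card = c.card - 1 - t.card := by
        rw [Finset.card_sdiff_of_subset htc, hcv]
      have htle : t.card ≤ c.card - 1 := by
        have := Finset.card_le_card htc
        omega
      have hpar := oddCnt_parity (G := G) (u := (c \ {v}) \ t)
      have hcoddn := Nat.odd_iff.1 hcodd
      have hge2 : t.card + 2 ≤ oddCnt G ((c \ {v}) \ t) := by
        rw [hcards] at hpar
        omega
      have hins : insert v t ⊆ c := Finset.insert_subset hv hsubc
      have hdisjT : Disjoint T (insert v t) := by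
        have h1 : insert v t ⊆ s \ T := hins.trans hcsub
        exact (Finset.disjoint_sdiff.mono_left (le_refl T)).symm.mono_left h1 |>.symm
      have hT's : T ∪ insert v t ⊆ s :=
        Finset.union_subset hTs ((hins.trans hcsub).trans Finset.sdiff_subset)
      have hT'card : (T ∪ insert v t).card = T.card + t.card + 1 := by
        rw [Finset.card_union_of_disjoint hdisjT, Finset.card_insert_of_notMem hvt]
        omega
      have hsd : s \ (T ∪ insert v t) = (s \ T) \ insert v t := by
        ext a
        simp only [Finset.mem_sdiff, Finset.mem_union]
        tauto
      have h1 : oddCnt G (s \ (T ∪ insert v t)) =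
          oddCnt G (c \ insert v t) + oddCnt G ((s \ T) \ c) := by
        rw [hsd]
        exact oddCnt_remove hc hins
      have h2 : oddCnt G (s \ T) = 1 + oddCnt G ((s \ T) \ c) :=
        oddCnt_sdiff_comp hc hcodd
      have hset2 : c \ insert v t = (c \ {v}) \ t := by
        ext a
        simp only [Finset.mem_sdiff, Finset.mem_insert, Finset.mem_singleton]
        tauto
      have hvt' : val T ≤ val (T ∪ insert v t) := by
        simp only [hval]
        rw [hT'card, h1, hset2, h2]
        push_cast
        omega
      have hcT := hcard (T ∪ insert v t) hT's hvt'
      omega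
    have hproper : c \ {v} ⊂ s := by
      have hsub : c \ {v} ⊆ s := (Finset.sdiff_subset.trans hcsub).trans Finset.sdiff_subset
      rw [Finset.ssubset_iff_of_subset hsub]
      refine ⟨v, (Finset.mem_sdiff.1 (hcsub hv)).1, by simp⟩
    obtain ⟨Mc, hMc, hMcard⟩ := IH (c \ {v}) hproper 0 hsubhyp
    have hub := hMc.two_mul_card_le
    have hcv : (c \ {v}).card = c.card - 1 := by
      rw [Finset.sdiff_singleton_eq_erase, Finset.card_erase_of_mem hv]
    have hcpos : 1 ≤ c.card := Finset.card_pos.2 ⟨v, hv⟩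
    exact ⟨Mc, hMc, by omega⟩
  -- (c) Hall's condition and SDR
  set CC := comps G (s \ T) with hCC
  set adjC : {x // x ∈ T} → Finset (Finset V) :=
    fun x => CC.filter (fun c => ∃ y ∈ c, G.Adj x.val y) with hadjC
  have hhall : ∀ A' : Finset {x // x ∈ T}, A'.card ≤ (A'.biUnion adjC).card := by
    intro A'
    by_contra hcon
    push_neg at hcon
    set Aset := A'.image Subtype.val with hAset
    have hAsub : Aset ⊆ T := by
      intro x hx
      obtain ⟨y, _, rfl⟩ := Finset.mem_image.1 hx
      exact y.2
    have hAcard : Aset.card = A'.card :=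
      Finset.card_image_of_injective _ Subtype.val_injective
    set S := T \ Aset with hS
    have hSs : S ⊆ s := Finset.sdiff_subset.trans hTs
    set N := A'.biUnion adjC with hN
    have hNsub : N ⊆ CC := by
      intro c hc
      obtain ⟨x, _, hcx⟩ := Finset.mem_biUnion.1 hc
      exact Finset.filter_subset _ _ hcx
    have hkeep : ∀ c ∈ CC, c ∉ N → c ∈ comps G (s \ S) := by
      intro c hc hcn
      apply mem_comps_superset hc
      · exact Finset.sdiff_subset_sdiff (le_refl s) Finset.sdiff_subset
      · intro a hac b hb hbn hadj
        have hbs : b ∈ s := (Finset.mem_sdiff.1 hb).1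
        have hbT : b ∈ T := by
          by_contra hbT
          exact hbn (Finset.mem_sdiff.2 ⟨hbs, hbT⟩)
        have hbA : b ∈ Aset := by
          by_contra hbA
          exact (Finset.mem_sdiff.1 hb).2 (Finset.mem_sdiff.2 ⟨hbT, hbA⟩)
        obtain ⟨x, hxA, hxval⟩ := Finset.mem_image.1 hbA
        apply hcn
        refine Finset.mem_biUnion.2 ⟨x, hxA, ?_⟩
        refine Finset.mem_filter.2 ⟨hc, ⟨a, hac, ?_⟩⟩
        rw [hxval]
        exact hadj.symm
    have hCCcard : CC.card = oddCnt G (s \ T) := by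
      unfold oddCnt
      rw [← hCC, Finset.filter_true_of_mem hodd]
    have hsub2 : CC \ N ⊆ (comps G (s \ S)).filter (fun c => Odd c.card) := by
      intro c hc
      obtain ⟨hc1, hc2⟩ := Finset.mem_sdiff.1 hc
      exact Finset.mem_filter.2 ⟨hkeep c hc1 hc2, hodd c hc1⟩
    have hcount : CC.card - N.card ≤ oddCnt G (s \ S) := by
      calc CC.card - N.card = (CC \ N).card := (Finset.card_sdiff_of_subset hNsub).symm
      _ ≤ _ := Finset.card_le_card hsub2
    have hScard : S.card = T.card - Aset.card := Finset.card_sdiff_of_subset hAsub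
    have hAT : Aset.card ≤ T.card := Finset.card_le_card hAsub
    have hNCC : N.card ≤ CC.card := Finset.card_le_card hNsub
    have hvS := hmax S hSs
    simp only [hval] at hvS
    rw [hScard] at hvS
    have hCCT : (oddCnt G (s \ T) : ℤ) - T.card = val T := by simp [hval]
    push_cast [Nat.cast_sub hAT] at hvS
    omega
  obtain ⟨f, hfinj, hfmem⟩ :=
    (Finset.all_card_le_biUnion_card_iff_exists_injective adjC).1 hhall
  -- (d) assembly
  set Tpart : Finset V → Finset V :=
    fun c => T.filter (fun x => ∃ hx : x ∈ T, f ⟨x, hx⟩ = c) with hTpart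
  have hfCC : ∀ x, f x ∈ CC := fun x => Finset.filter_subset _ _ (hfmem x)
  have hTpart_sub : ∀ c, Tpart c ⊆ T := fun c => Finset.filter_subset _ _
  have hTpart_eq : ∀ c x, x ∈ Tpart c → ∀ hx : x ∈ T, f ⟨x, hx⟩ = c := by
    intro c x hx hx'
    obtain ⟨hx1, hx2⟩ := (Finset.mem_filter.1 hx).2
    have heq : (⟨x, hx'⟩ : {z // z ∈ T}) = ⟨x, hx1⟩ := Subtype.ext rfl
    rw [heq]
    exact hx2
  have hTpart_disj : ∀ c c', c ≠ c' → Disjoint (Tpart c) (Tpart c') := by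
    intro c c' hne
    rw [Finset.disjoint_left]
    intro x hx hx'
    have hxT : x ∈ T := hTpart_sub c hx
    exact hne ((hTpart_eq c x hx hxT).symm.trans (hTpart_eq c' x hx' hxT))
  have hTpart_card : ∀ c, (Tpart c).card ≤ 1 := by
    intro c
    rw [Finset.card_le_one]
    intro x hx y hy
    have hxT : x ∈ T := hTpart_sub c hx
    have hyT : y ∈ T := hTpart_sub c hy
    have h1 := hTpart_eq c x hx hxT
    have h2 := hTpart_eq c y hy hyT
    have := hfinj (h1.trans h2.symm)
    exact congrArg Subtype.val this
  have hTbiUnion : CC.biUnion Tpart = T := by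
    apply Finset.Subset.antisymm
    · intro x hx
      obtain ⟨c, _, hxc⟩ := Finset.mem_biUnion.1 hx
      exact hTpart_sub c hxc
    · intro x hx
      refine Finset.mem_biUnion.2 ⟨f ⟨x, hx⟩, hfCC _, ?_⟩
      exact Finset.mem_filter.2 ⟨hx, ⟨hx, rfl⟩⟩
  have hTpart_disj_comp : ∀ c c', c' ∈ CC → Disjoint (Tpart c) c' := by
    intro c c' hc'
    have h1 : c' ⊆ s \ T := comps_subset hc'
    rw [Finset.disjoint_left]
    intro x hx hx'
    exact (Finset.mem_sdiff.1 (h1 hx')).2 (hTpart_sub c hx)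
  -- per-component matchings
  have hper : ∀ c ∈ CC, ∃ Mc, IsM G (c ∪ Tpart c) Mc ∧
      2 * Mc.card + 1 = c.card + 2 * (Tpart c).card := by
    intro c hc
    rcases Finset.eq_empty_or_nonempty (Tpart c) with he | ⟨x, hx⟩
    · obtain ⟨v, hv⟩ := comps_nonempty hc
      obtain ⟨Mc, h1, h2⟩ := hfc c hc v hv
      refine ⟨Mc, h1.mono ?_, by rw [he]; simpa using h2⟩
      rw [he, Finset.union_empty]
      exact Finset.sdiff_subset
    · have hxT : x ∈ T := hTpart_sub c hx
      have hfx : f ⟨x, hxT⟩ = c := hTpart_eq c x hx hxT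
      have hcadj : c ∈ adjC ⟨x, hxT⟩ := hfx ▸ hfmem ⟨x, hxT⟩
      obtain ⟨y, hyc, hadj⟩ := (Finset.mem_filter.1 hcadj).2
      obtain ⟨Mc, h1, h2⟩ := hfc c hc y hyc
      have hTeq : Tpart c = {x} := by
        apply Finset.eq_singleton_iff_unique_mem.2
        refine ⟨hx, fun z hz => ?_⟩
        have := hTpart_card c
        rw [Finset.card_le_one] at this
        exact this z hz x hx
      have hxnc : x ∉ c := by
        have := comps_subset hc
        intro hxc
        exact (Finset.mem_sdiff.1 (this hxc)).2 hxT
      have hxny : x ∉ c \ {y} := fun h => hxnc (Finset.sdiff_subset h)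
      have hyny : y ∉ c \ {y} := by simp
      obtain ⟨h3, h4⟩ := IsM_insert_pair h1 hadj hxny hyny
      refine ⟨insert s(x, y) Mc, h3.mono ?_, ?_⟩
      · intro z hz
        rw [hTeq]
        rcases Finset.mem_insert.1 hz with rfl | hz'
        · exact Finset.mem_union_right _ (Finset.mem_singleton_self z)
        · rcases Finset.mem_insert.1 hz' with rfl | hz''
          · exact Finset.mem_union_left _ hyc
          · exact Finset.mem_union_left _ (Finset.sdiff_subset hz'')
      · rw [h4, hTeq, Finset.card_singleton]
        omega
  choose! Mc hMc1 hMc2 using hper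
  have hzdisj : ∀ c ∈ CC, ∀ c' ∈ CC, c ≠ c' →
      Disjoint (c ∪ Tpart c) (c' ∪ Tpart c') := by
    intro c hc c' hc' hne
    rw [Finset.disjoint_union_left, Finset.disjoint_union_right,
      Finset.disjoint_union_right]
    exact ⟨⟨comps_disjoint hc hc' hne, (hTpart_disj_comp c' c hc).symm⟩,
      ⟨hTpart_disj_comp c c' hc', hTpart_disj c c' hne⟩⟩
  obtain ⟨hglue1, hglue2⟩ := IsM_glue (G := G) (I := CC)
    (zone := fun c => c ∪ Tpart c) (Mf := Mc) hzdisj hMc1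
  set M := CC.biUnion Mc with hM
  have hMs : IsM G s M := by
    apply hglue1.mono
    intro x hx
    obtain ⟨c, hc, hxc⟩ := Finset.mem_biUnion.1 hx
    rcases Finset.mem_union.1 hxc with h | h
    · exact Finset.sdiff_subset (comps_subset hc h)
    · exact hTs (hTpart_sub c h)
  -- cardinality count
  have hsum1 : ∑ c ∈ CC, (2 * (Mc c).card + 1) = 2 * M.card + CC.card := by
    rw [Finset.sum_add_distrib, ← Finset.mul_sum, ← hglue2]
    simp
  have hsum2 : ∑ c ∈ CC, (c.card + 2 * (Tpart c).card)
      = (s \ T).card + 2 * T.card := by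
    rw [Finset.sum_add_distrib, ← Finset.mul_sum]
    congr 1
    · exact sum_comps_card
    · congr 1
      rw [← hTbiUnion]
      exact (Finset.card_biUnion (fun c hc c' hc' hne => hTpart_disj c c' hne)).symm
  have hsums : 2 * M.card + CC.card = (s \ T).card + 2 * T.card := by
    rw [← hsum1, ← hsum2]
    exact Finset.sum_congr rfl (fun c hc => hMc2 c hc)
  have hCCcard : CC.card = oddCnt G (s \ T) := by
    unfold oddCnt
    rw [← hCC, Finset.filter_true_of_mem hodd]
  have hsTcard : (s \ T).card = s.card - T.card := Finset.card_sdiff_of_subset hTs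
  have hTle : T.card ≤ s.card := Finset.card_le_card hTs
  refine ⟨M, hMs, ?_⟩
  simp only [hval] at hd0k hd0nn
  omega

end MatchReg

namespace MatchReg
variable {V : Type} [Fintype V]

lemma regular_hyp {G : SimpleGraph V} {d : ℕ} (hd : 1 ≤ d)
    (hreg : G.IsRegularOfDegree d) (t : Finset V) :
    oddCnt G (Finset.univ \ t) ≤ t.card + Fintype.card V / (d + 1) := by
  classical
  set u : Finset V := Finset.univ \ t with hu
  set oddF := (comps G u).filter (fun c => Odd c.card) with hoddF
  set small := oddF.filter (fun c => c.card ≤ d) with hsmall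
  set big := oddF.filter (fun c => ¬ c.card ≤ d) with hbig
  have hsplit : oddCnt G u = small.card + big.card := by
    unfold oddCnt
    rw [← hoddF, hsmall, hbig, Finset.card_filter_add_card_filter_not]
  have hdeg : ∀ y : V, (Finset.univ.filter (G.Adj y)).card = d := by
    intro y
    have := hreg y
    rwa [← SimpleGraph.neighborFinset_eq_filter]
  -- big components
  have hbigcard : big.card ≤ Fintype.card V / (d + 1) := by
    rw [Nat.le_div_iff_mul_le (Nat.succ_pos d)]
    have h1 : ∀ c ∈ big, d + 1 ≤ c.card := by
      intro c hc
      have := (Finset.mem_filter.1 hc).2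
      omega
    calc big.card * (d + 1) = ∑ _c ∈ big, (d + 1) := by
          rw [Finset.sum_const, smul_eq_mul]
      _ ≤ ∑ c ∈ big, c.card := Finset.sum_le_sum h1
      _ ≤ ∑ c ∈ comps G u, c.card := by
          apply Finset.sum_le_sum_of_subset
          rw [hbig, hoddF]
          exact (Finset.filter_subset _ _).trans (Finset.filter_subset _ _)
      _ = u.card := sum_comps_card
      _ ≤ Fintype.card V := by
          rw [← Finset.card_univ]
          exact Finset.card_le_card (Finset.subset_univ u)
  -- small components: edge counting
  set E : Finset V → ℕ := fun c => ∑ y ∈ c, (t.filter (G.Adj y)).card with hE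
  have hElow : ∀ c ∈ small, d ≤ E c := by
    intro c hcs
    have hc : c ∈ comps G u := by
      have := (Finset.mem_filter.1 hcs).1
      exact (Finset.mem_filter.1 this).1
    have hcodd : Odd c.card := (Finset.mem_filter.1 (Finset.mem_filter.1 hcs).1).2
    have hcd : c.card ≤ d := (Finset.mem_filter.1 hcs).2
    have hcpos : 1 ≤ c.card := Finset.card_pos.2 (comps_nonempty hc)
    have hy : ∀ y ∈ c, d + 1 - c.card ≤ (t.filter (G.Adj y)).card := by
      intro y hy
      have hsplitd : (t.filter (G.Adj y)).card + (u.filter (G.Adj y)).card = d := by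
        rw [← hdeg y]
        rw [← Finset.card_union_of_disjoint]
        · congr 1
          ext z
          simp only [Finset.mem_union, Finset.mem_filter, hu, Finset.mem_sdiff,
            Finset.mem_univ, true_and]
          tauto
        · rw [Finset.disjoint_left]
          intro z hz hz'
          have h1 := (Finset.mem_filter.1 hz).1
          have h2 := (Finset.mem_filter.1 hz').1
          rw [hu, Finset.mem_sdiff] at h2
          exact h2.2 h1
      have hub : (u.filter (G.Adj y)).card ≤ c.card - 1 := by
        have hsub : u.filter (G.Adj y) ⊆ c \ {y} := by
          obtain ⟨v, hv, hcv⟩ := mem_comps.1 hc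
          intro z hz
          obtain ⟨hzu, hadj⟩ := Finset.mem_filter.1 hz
          have hyc : y ∈ comp G u v := hcv ▸ hy
          have hzc : z ∈ comp G u v := adj_mem_comp hyc hzu hadj
          refine Finset.mem_sdiff.2 ⟨hcv ▸ hzc, ?_⟩
          simp only [Finset.mem_singleton]
          intro h
          subst h
          exact G.irrefl hadj
        calc (u.filter (G.Adj y)).card ≤ (c \ {y}).card := Finset.card_le_card hsub
          _ = c.card - 1 := by
            rw [Finset.sdiff_singleton_eq_erase, Finset.card_erase_of_mem hy]
      omega
    have hsum : c.card * (d + 1 - c.card) ≤ E c := by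
      calc c.card * (d + 1 - c.card) = ∑ _y ∈ c, (d + 1 - c.card) := by
            rw [Finset.sum_const, smul_eq_mul]
        _ ≤ E c := Finset.sum_le_sum hy
    -- c.card * (d + 1 - c.card) ≥ d for 1 ≤ c.card ≤ d
    have harith : d ≤ c.card * (d + 1 - c.card) := by
      obtain ⟨a, ha⟩ := Nat.exists_eq_add_of_le hcpos
      obtain ⟨b, hb⟩ := Nat.exists_eq_add_of_le hcd
      have hq : d + 1 - c.card = 1 + b := by omega
      rw [hq, ha]
      ring_nf
      nlinarith
    omega
  have hEupper : ∑ c ∈ comps G u, E c ≤ d * t.card := by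
    have h1 : ∑ c ∈ comps G u, E c = ∑ y ∈ u, (t.filter (G.Adj y)).card := by
      have hpd : (↑(comps G u) : Set (Finset V)).PairwiseDisjoint id := by
        intro c hc c' hc' hne
        exact comps_disjoint (Finset.mem_coe.1 hc) (Finset.mem_coe.1 hc') hne
      have hb := Finset.sum_biUnion (f := fun y => (t.filter (G.Adj y)).card) hpd
      rw [comps_biUnion] at hb
      simpa using hb.symm
    rw [h1]
    have h2 : ∑ y ∈ u, (t.filter (G.Adj y)).card
        = ∑ x ∈ t, (u.filter (G.Adj x)).card := by
      simp only [Finset.card_filter]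
      rw [Finset.sum_comm]
      refine Finset.sum_congr rfl (fun x _ => Finset.sum_congr rfl (fun y _ => ?_))
      by_cases h : G.Adj y x
      · rw [if_pos h, if_pos h.symm]
      · rw [if_neg h, if_neg (fun h' => h h'.symm)]
    rw [h2]
    calc ∑ x ∈ t, (u.filter (G.Adj x)).card ≤ ∑ _x ∈ t, d := by
          apply Finset.sum_le_sum
          intro x _
          rw [← hdeg x]
          exact Finset.card_le_card (Finset.filter_subset_filter _ (Finset.subset_univ u))
      _ = t.card * d := by rw [Finset.sum_const, smul_eq_mul]
      _ = d * t.card := Nat.mul_comm _ _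
  have hsmallcard : small.card ≤ t.card := by
    have h1 : d * small.card ≤ ∑ c ∈ small, E c := by
      calc d * small.card = ∑ _c ∈ small, d := by rw [Finset.sum_const, smul_eq_mul, Nat.mul_comm]
        _ ≤ ∑ c ∈ small, E c := Finset.sum_le_sum hElow
    have h2 : ∑ c ∈ small, E c ≤ ∑ c ∈ comps G u, E c := by
      apply Finset.sum_le_sum_of_subset
      rw [hsmall, hoddF]
      exact (Finset.filter_subset _ _).trans (Finset.filter_subset _ _)
    have h3 : d * small.card ≤ d * t.card := le_trans h1 (le_trans h2 hEupper)
    exact Nat.le_of_mul_le_mul_left h3 hd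
  omega

end MatchReg

/-- Every `n`-vertex `d`-regular simple graph (`d ≥ 1`) contains a matching of size at
least `d·n/(2d+2)`, and in particular of size at least `n/4`. -/
theorem matching_in_regular_graph (V : Type) [Fintype V] (G : SimpleGraph V) (d : ℕ)
    (hd : 1 ≤ d) (hreg : G.IsRegularOfDegree d) :
    ∃ M : Finset (Sym2 V),
      (↑M : Set (Sym2 V)) ⊆ G.edgeSet ∧
      (∀ e ∈ M, ∀ f ∈ M, e ≠ f → ∀ v : V, v ∈ e → v ∉ f) ∧
      ((d : ℝ) * (Fintype.card V : ℝ)) / (2 * (d : ℝ) + 2) ≤ (M.card : ℝ) ∧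
      (Fintype.card V : ℝ) / 4 ≤ (M.card : ℝ) := by
  classical
  set n := Fintype.card V with hn
  obtain ⟨M, hM, hMcard⟩ := MatchReg.tutteBerge G Finset.univ (n / (d + 1)) (by
    intro t _
    exact MatchReg.regular_hyp hd hreg t)
  rw [Finset.card_univ, ← hn] at hMcard
  -- key natural number inequality: d * n ≤ M.card * (2 * d + 2)
  have hkey : d * n ≤ M.card * (2 * d + 2) := by
    have h1 : n * (d + 1) ≤ (2 * M.card + n / (d + 1)) * (d + 1) :=
      Nat.mul_le_mul_right _ hMcard
    have h2 : (n / (d + 1)) * (d + 1) ≤ n := Nat.div_mul_le_self n (d + 1)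
    nlinarith
  have hkey2 : n ≤ 4 * M.card := by
    have h3 : d * n ≤ M.card * (4 * d) := by nlinarith
    have h4 : n * d ≤ (4 * M.card) * d := by nlinarith
    exact Nat.le_of_mul_le_mul_right h4 hd
  refine ⟨M, ?_, hM.2.2, ?_, ?_⟩
  · intro e he
    exact hM.1 e he
  · rw [div_le_iff₀ (by positivity)]
    have := (Nat.cast_le (α := ℝ)).2 hkey
    push_cast at this ⊢
    linarith
  · rw [div_le_iff₀ (by norm_num)]
    have := (Nat.cast_le (α := ℝ)).2 hkey2
    push_cast at this ⊢
    linarith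
end

section
/- Kővári–Sós–Turán: For every B ≥ 1 there is a constant C = C(B) such that every graph on m vertices containing no copy of the complete bipartite graph K_{B,B} as a subgraph has at most C·m^{2−1/B} edges. -/
open Finset Nat

attribute [local instance] Classical.propDecidable

private lemma kst_rpow_aux (B : ℕ) (hB : 1 ≤ B) (X M : ℝ) (hX : 0 ≤ X) (hM : 1 ≤ M)
    (h : X ^ B ≤ (B : ℝ) * M ^ (2 * B - 1)) :
    X ≤ (B : ℝ) * M ^ ((2 : ℝ) - 1 / (B : ℝ)) := by
  have hB0 : (0 : ℝ) < B := by exact_mod_cast hB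
  have hB1 : (1 : ℝ) ≤ B := by exact_mod_cast hB
  have hM0 : (0 : ℝ) ≤ M := by linarith
  have hXB : X ≤ ((B : ℝ) * M ^ (2 * B - 1)) ^ ((B : ℝ)⁻¹) := by
    have h2 := Real.rpow_le_rpow (by positivity) h (by positivity : (0 : ℝ) ≤ (B : ℝ)⁻¹)
    rwa [← Real.rpow_natCast X B, ← Real.rpow_mul hX, mul_inv_cancel₀ hB0.ne',
      Real.rpow_one] at h2
  have hexp : ((2 * B - 1 : ℕ) : ℝ) * (B : ℝ)⁻¹ = (2 : ℝ) - 1 / (B : ℝ) := by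
    have : ((2 * B - 1 : ℕ) : ℝ) = 2 * (B : ℝ) - 1 := by
      have : 1 ≤ 2 * B := by omega
      push_cast [Nat.cast_sub this]
      ring
    rw [this]
    field_simp
  have hsplit : ((B : ℝ) * M ^ (2 * B - 1)) ^ ((B : ℝ)⁻¹)
      = (B : ℝ) ^ ((B : ℝ)⁻¹) * M ^ ((2 : ℝ) - 1 / (B : ℝ)) := by
    rw [Real.mul_rpow (by positivity) (by positivity), ← Real.rpow_natCast M (2 * B - 1),
      ← Real.rpow_mul hM0, hexp]
  have hBB : (B : ℝ) ^ ((B : ℝ)⁻¹) ≤ (B : ℝ) := by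
    have h1 : (B : ℝ)⁻¹ ≤ 1 := by
      rw [inv_le_one_iff₀]; right; exact hB1
    calc (B : ℝ) ^ ((B : ℝ)⁻¹) ≤ (B : ℝ) ^ (1 : ℝ) :=
          Real.rpow_le_rpow_of_exponent_le hB1 h1
      _ = (B : ℝ) := Real.rpow_one _
  have hMpos : 0 ≤ M ^ ((2 : ℝ) - 1 / (B : ℝ)) := Real.rpow_nonneg hM0 _
  calc X ≤ ((B : ℝ) * M ^ (2 * B - 1)) ^ ((B : ℝ)⁻¹) := hXB
    _ = (B : ℝ) ^ ((B : ℝ)⁻¹) * M ^ ((2 : ℝ) - 1 / (B : ℝ)) := hsplit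
    _ ≤ (B : ℝ) * M ^ ((2 : ℝ) - 1 / (B : ℝ)) := by
        exact mul_le_mul_of_nonneg_right hBB hMpos

/-- Kővári–Sós–Turán: for every `B ≥ 1` there is a constant `C = C(B)` such that every
graph on `m` vertices with no `K_{B,B}` subgraph has at most `C·m^(2-1/B)` edges. -/
theorem kovari_sos_turan (B : ℕ) (hB : 1 ≤ B) :
    ∃ C : ℝ, 0 < C ∧
      ∀ (V : Type) [Fintype V] (G : SimpleGraph V),
        (¬ ∃ (A A' : Finset V), A.card = B ∧ A'.card = B ∧ Disjoint A A' ∧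
            ∀ a ∈ A, ∀ b ∈ A', G.Adj a b) →
        (G.edgeFinset.card : ℝ) ≤ C * (Fintype.card V : ℝ) ^ ((2 : ℝ) - 1 / (B : ℝ)) := by
  refine ⟨B, by exact_mod_cast Nat.lt_of_lt_of_le Nat.zero_lt_one hB, ?_⟩
  intro V _ G hK
  classical
  set m := Fintype.card V with hm
  have hexp_pos : (0 : ℝ) < (2 : ℝ) - 1 / (B : ℝ) := by
    have hB1 : (1 : ℝ) ≤ B := by exact_mod_cast hB
    have : 1 / (B : ℝ) ≤ 1 := by
      rw [div_le_one (by linarith)]; exact hB1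
    linarith
  rcases Nat.eq_zero_or_pos m with hm0 | hmpos
  · have hVe : IsEmpty V := Fintype.card_eq_zero_iff.mp hm0
    have he : G.edgeFinset = ∅ := by
      ext e
      induction e using Sym2.ind with
      | _ a b => exact (hVe.false a).elim
    rw [he, hm0]
    simp only [Finset.card_empty, Nat.cast_zero, Real.zero_rpow hexp_pos.ne', mul_zero,
      le_refl]
  -- the key counting bound: each B-set has at most B-1 common neighbors
  have key : ∀ S ∈ (univ : Finset V).powersetCard B,
      (univ.filter fun v => S ⊆ G.neighborFinset v).card ≤ B - 1 := by
    intro S hS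
    rw [mem_powersetCard] at hS
    by_contra hcon
    have hBle : B ≤ (univ.filter fun v => S ⊆ G.neighborFinset v).card := by omega
    obtain ⟨A, hAsub, hAcard⟩ := Finset.exists_subset_card_eq hBle
    apply hK
    refine ⟨A, S, hAcard, hS.2, ?_, ?_⟩
    · rw [Finset.disjoint_left]
      intro a haA haS
      have h1 := (Finset.mem_filter.mp (hAsub haA)).2 haS
      exact G.irrefl ((SimpleGraph.mem_neighborFinset G a a).mp h1)
    · intro a haA b hbS
      have h1 := (Finset.mem_filter.mp (hAsub haA)).2 hbS
      exact (SimpleGraph.mem_neighborFinset G a b).mp h1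
  -- double counting
  have count : ∑ v : V, (G.degree v).choose B ≤ (B - 1) * m.choose B := by
    have h1 : ∀ v : V, (G.degree v).choose B =
        (((univ : Finset V).powersetCard B).filter fun S => S ⊆ G.neighborFinset v).card := by
      intro v
      rw [← G.card_neighborFinset_eq_degree, ← Finset.card_powersetCard]
      congr 1
      ext S
      simp only [Finset.mem_powersetCard, Finset.mem_filter, Finset.subset_univ, true_and]
      tauto
    calc ∑ v : V, (G.degree v).choose B
        = ∑ v : V, ∑ S ∈ (univ : Finset V).powersetCard B,
            if S ⊆ G.neighborFinset v then 1 else 0 := by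
          simp_rw [h1, Finset.card_filter]
      _ = ∑ S ∈ (univ : Finset V).powersetCard B, ∑ v : V,
            if S ⊆ G.neighborFinset v then 1 else 0 := Finset.sum_comm
      _ = ∑ S ∈ (univ : Finset V).powersetCard B,
            (univ.filter fun v => S ⊆ G.neighborFinset v).card := by
          simp_rw [Finset.card_filter]
      _ ≤ ∑ _S ∈ (univ : Finset V).powersetCard B, (B - 1) := Finset.sum_le_sum key
      _ = ((univ : Finset V).powersetCard B).card * (B - 1) := by
          rw [Finset.sum_const, smul_eq_mul]
      _ = m.choose B * (B - 1) := by rw [Finset.card_powersetCard, Finset.card_univ]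
      _ = (B - 1) * m.choose B := mul_comm _ _
  -- natural number inequality for the powers
  have nat_ineq : ∑ v : V, (G.degree v + 1 - B) ^ B ≤ (B - 1) * m ^ B := by
    calc ∑ v : V, (G.degree v + 1 - B) ^ B
        ≤ ∑ v : V, (G.degree v).descFactorial B :=
          Finset.sum_le_sum fun v _ => Nat.pow_sub_le_descFactorial _ _
      _ = ∑ v : V, B ! * (G.degree v).choose B := by
          simp_rw [Nat.descFactorial_eq_factorial_mul_choose]
      _ = B ! * ∑ v : V, (G.degree v).choose B := by rw [Finset.mul_sum]
      _ ≤ B ! * ((B - 1) * m.choose B) := Nat.mul_le_mul_left _ count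
      _ = (B - 1) * (B ! * m.choose B) := by ring
      _ = (B - 1) * m.descFactorial B := by rw [Nat.descFactorial_eq_factorial_mul_choose]
      _ ≤ (B - 1) * m ^ B := Nat.mul_le_mul_left _ (Nat.descFactorial_le_pow _ _)
  -- pass to the reals
  set M : ℝ := (m : ℝ) with hM
  have hM1 : (1 : ℝ) ≤ M := by rw [hM]; exact_mod_cast hmpos
  have hM0 : (0 : ℝ) ≤ M := by linarith
  have hB0 : (0 : ℝ) < B := by exact_mod_cast Nat.lt_of_lt_of_le Nat.zero_lt_one hB
  set E : ℝ := (G.edgeFinset.card : ℝ) with hE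
  have hMrp : M ≤ M ^ ((2 : ℝ) - 1 / (B : ℝ)) := by
    calc M = M ^ (1 : ℝ) := (Real.rpow_one M).symm
      _ ≤ M ^ ((2 : ℝ) - 1 / (B : ℝ)) := by
          apply Real.rpow_le_rpow_of_exponent_le hM1
          have : 1 / (B : ℝ) ≤ 1 := by
            rw [div_le_one hB0]; exact_mod_cast hB
          linarith
  set f : V → ℝ := fun v => ((G.degree v + 1 - B : ℕ) : ℝ) with hf
  have hf0 : ∀ v ∈ (univ : Finset V), 0 ≤ f v := fun v _ => Nat.cast_nonneg _
  -- lower bound on the sum of f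
  have hsumf : 2 * E - ((B : ℝ) - 1) * M ≤ ∑ v : V, f v := by
    have hcast : ∀ v : V, (G.degree v : ℝ) - ((B : ℝ) - 1) ≤ f v := by
      intro v
      rcases le_total B (G.degree v + 1) with h | h
      · show (G.degree v : ℝ) - ((B : ℝ) - 1) ≤ ((G.degree v + 1 - B : ℕ) : ℝ)
        rw [Nat.cast_sub h]
        push_cast
        linarith
      · have h1 : (G.degree v : ℝ) + 1 ≤ B := by exact_mod_cast h
        have h2 : (0 : ℝ) ≤ f v := Nat.cast_nonneg _
        linarith
    have hdeg : ∑ v : V, (G.degree v : ℝ) = 2 * E := by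
      rw [hE]
      exact_mod_cast congrArg (Nat.cast : ℕ → ℝ) (G.sum_degrees_eq_twice_card_edges)
    calc 2 * E - ((B : ℝ) - 1) * M
        = ∑ v : V, ((G.degree v : ℝ) - ((B : ℝ) - 1)) := by
          rw [Finset.sum_sub_distrib, hdeg, Finset.sum_const, Finset.card_univ]
          simp [hM, mul_comm]
          exact Or.inl hm
      _ ≤ ∑ v : V, f v := Finset.sum_le_sum fun v _ => hcast v
  -- Jensen
  have hjensen : (∑ v : V, f v) ^ B ≤ M ^ (B - 1) * ∑ v : V, f v ^ B := by
    obtain ⟨k, hk⟩ : ∃ k, B = k + 1 := ⟨B - 1, by omega⟩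
    have hJ := pow_sum_div_card_le_sum_pow (s := (univ : Finset V)) (f := f) hf0 k
    rw [Finset.card_univ] at hJ
    have hMk : (0 : ℝ) < M ^ k := by positivity
    rw [div_le_iff₀ hMk] at hJ
    rw [hk]
    simp only [Nat.add_sub_cancel]
    calc (∑ v : V, f v) ^ (k + 1) ≤ (∑ v : V, f v ^ (k + 1)) * M ^ k := by
          exact_mod_cast hJ
      _ = M ^ k * ∑ v : V, f v ^ (k + 1) := mul_comm _ _
  have hsum_pow : ∑ v : V, f v ^ B ≤ (B : ℝ) * M ^ B := by
    have h1 : (∑ v : V, ((G.degree v + 1 - B) ^ B : ℕ) : ℝ) ≤ (((B - 1) * m ^ B : ℕ) : ℝ) := by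
      exact_mod_cast nat_ineq
    have h2 : ∑ v : V, f v ^ B = (∑ v : V, ((G.degree v + 1 - B) ^ B : ℕ) : ℝ) := by
      push_cast [hf]
      rfl
    have h3 : (((B - 1) * m ^ B : ℕ) : ℝ) ≤ (B : ℝ) * M ^ B := by
      push_cast
      have hb1 : ((B - 1 : ℕ) : ℝ) ≤ (B : ℝ) := by
        exact_mod_cast Nat.sub_le B 1
      have : (0 : ℝ) ≤ M ^ B := by positivity
      exact mul_le_mul_of_nonneg_right hb1 this
    rw [h2]
    exact h1.trans h3
  -- put it together
  set X : ℝ := 2 * E - ((B : ℝ) - 1) * M with hX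
  have hEfin : E ≤ (B : ℝ) * M ^ ((2 : ℝ) - 1 / (B : ℝ)) := by
    rcases le_total X 0 with hX0 | hX0
    · -- then 2E ≤ (B-1)M ≤ 2B M^(2-1/B)
      have h1 : 2 * E ≤ ((B : ℝ) - 1) * M := by rw [hX] at hX0; linarith
      have h2 : ((B : ℝ) - 1) * M ≤ (B : ℝ) * M ^ ((2 : ℝ) - 1 / (B : ℝ)) := by
        have : ((B : ℝ) - 1) * M ≤ (B : ℝ) * M :=
          mul_le_mul_of_nonneg_right (by linarith) hM0
        have h3 : (B : ℝ) * M ≤ (B : ℝ) * M ^ ((2 : ℝ) - 1 / (B : ℝ)) :=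
          mul_le_mul_of_nonneg_left hMrp hB0.le
        linarith
      have hMpos : 0 ≤ (B : ℝ) * M ^ ((2 : ℝ) - 1 / (B : ℝ)) := by
        have := Real.rpow_nonneg hM0 ((2 : ℝ) - 1 / (B : ℝ))
        positivity
      nlinarith
    · have hXsum : X ≤ ∑ v : V, f v := hsumf
      have hXpow : X ^ B ≤ (B : ℝ) * M ^ (2 * B - 1) := by
        have h1 : X ^ B ≤ (∑ v : V, f v) ^ B :=
          pow_le_pow_left₀ hX0 hXsum B
        have h2 : M ^ (B - 1) * ∑ v : V, f v ^ B ≤ M ^ (B - 1) * ((B : ℝ) * M ^ B) := by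
          apply mul_le_mul_of_nonneg_left hsum_pow (by positivity)
        have h3 : M ^ (B - 1) * ((B : ℝ) * M ^ B) = (B : ℝ) * M ^ (2 * B - 1) := by
          rw [← mul_assoc, mul_comm (M ^ (B - 1)) (B : ℝ), mul_assoc, ← pow_add]
          congr 2
          omega
        calc X ^ B ≤ (∑ v : V, f v) ^ B := h1
          _ ≤ M ^ (B - 1) * ∑ v : V, f v ^ B := hjensen
          _ ≤ M ^ (B - 1) * ((B : ℝ) * M ^ B) := h2
          _ = (B : ℝ) * M ^ (2 * B - 1) := h3
      have hXle := kst_rpow_aux B hB X M hX0 hM1 hXpow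
      -- 2E = X + (B-1)M ≤ B M^... + B M^...
      have h4 : ((B : ℝ) - 1) * M ≤ (B : ℝ) * M ^ ((2 : ℝ) - 1 / (B : ℝ)) := by
        have h5 : ((B : ℝ) - 1) * M ≤ (B : ℝ) * M :=
          mul_le_mul_of_nonneg_right (by linarith) hM0
        have h6 : (B : ℝ) * M ≤ (B : ℝ) * M ^ ((2 : ℝ) - 1 / (B : ℝ)) :=
          mul_le_mul_of_nonneg_left hMrp hB0.le
        linarith
      rw [hX] at hXle
      linarith
  exact hEfin
end

section
/- Let G be an n-vertex d-regular graph containing no K_{B,B} subgraph (B ≥ 1 fixed), let M be a matching in G, and let G_M be the graph on the edges of M where two matching edges are adjacent if some edge of G joins their endpoints. Then for every vertex v of G_M, the induced subgraph of G_M on the neighborhood of v has at most C·d^{2−1/B} edges, for a constant C depending only on B. -/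
open Finset

attribute [local instance] Classical.propDecidable

/-- Two matching edges are adjacent in the contracted graph iff some edge of `G` joins
an endpoint of one to an endpoint of the other. -/
def contractedAdj {V : Type} (G : SimpleGraph V) (e f : Sym2 V) : Prop :=
  e ≠ f ∧ ∃ x ∈ e, ∃ y ∈ f, G.Adj x y

section Aux

variable {V : Type} [Fintype V] {G : SimpleGraph V} {B : ℕ}

lemma sym2_endpoints_card_le (e : Sym2 V) : (univ.filter (· ∈ e)).card ≤ 2 := by
  induction e using Sym2.ind with
  | _ x y =>
    calc (univ.filter (· ∈ s(x,y))).card ≤ ({x, y} : Finset V).card := by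
          apply card_le_card
          intro z hz
          simp only [mem_filter, Sym2.mem_iff] at hz
          simp [hz.2]
      _ ≤ 2 := card_le_two

lemma common_nbrs_card_le (hB : 1 ≤ B)
    (hK : ¬ ∃ (A A' : Finset V), A.card = B ∧ A'.card = B ∧ Disjoint A A' ∧
            ∀ a ∈ A, ∀ b ∈ A', G.Adj a b)
    (S T : Finset V) (hT : T.card = B) :
    (S.filter (fun x => ∀ y ∈ T, G.Adj x y)).card ≤ B - 1 := by
  by_contra hc
  push_neg at hc
  have hBle : B ≤ (S.filter (fun x => ∀ y ∈ T, G.Adj x y)).card := by omega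
  obtain ⟨A', hA'sub, hA'card⟩ := Finset.exists_subset_card_eq hBle
  apply hK
  refine ⟨T, A', hT, hA'card, ?_, ?_⟩
  · rw [Finset.disjoint_left]
    intro z hzT hzA'
    have := (Finset.mem_filter.mp (hA'sub hzA')).2 z hzT
    exact G.loopless.irrefl z this
  · intro a ha b hb
    exact ((Finset.mem_filter.mp (hA'sub hb)).2 a ha).symm

lemma sum_choose_le (hB : 1 ≤ B)
    (hK : ¬ ∃ (A A' : Finset V), A.card = B ∧ A'.card = B ∧ Disjoint A A' ∧
            ∀ a ∈ A, ∀ b ∈ A', G.Adj a b)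
    (S : Finset V) :
    ∑ x ∈ S, ((S.filter (G.Adj x)).card).choose B ≤ (B - 1) * (S.card.choose B) := by
  have key : ∀ x, ((S.filter (G.Adj x)).card).choose B
      = ((S.powersetCard B).filter (fun T => ∀ y ∈ T, G.Adj x y)).card := by
    intro x
    rw [← Finset.card_powersetCard]
    congr 1
    ext T
    simp only [mem_powersetCard, mem_filter, Finset.subset_iff, mem_filter]
    aesop
  calc ∑ x ∈ S, ((S.filter (G.Adj x)).card).choose B
      = ∑ x ∈ S, ∑ T ∈ S.powersetCard B, if (∀ y ∈ T, G.Adj x y) then 1 else 0 := by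
        simp_rw [key, Finset.card_filter]
    _ = ∑ T ∈ S.powersetCard B, ∑ x ∈ S, if (∀ y ∈ T, G.Adj x y) then 1 else 0 :=
        Finset.sum_comm
    _ = ∑ T ∈ S.powersetCard B, (S.filter (fun x => ∀ y ∈ T, G.Adj x y)).card := by
        simp_rw [Finset.card_filter]
    _ ≤ ∑ _T ∈ S.powersetCard B, (B - 1) := by
        apply Finset.sum_le_sum
        intro T hT
        exact common_nbrs_card_le hB hK S T (Finset.mem_powersetCard.mp hT).2
    _ = (S.powersetCard B).card * (B - 1) := by rw [Finset.sum_const, smul_eq_mul]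
    _ = (B - 1) * (S.card.choose B) := by rw [Finset.card_powersetCard, Nat.mul_comm]

lemma card_filter_product {α : Type} (S : Finset α) (p : α × α → Prop) :
    ((S ×ˢ S).filter p).card = ∑ x ∈ S, (S.filter (fun y => p (x, y))).card := by
  rw [Finset.card_filter, Finset.sum_product]
  simp_rw [Finset.card_filter]

lemma analytic (B : ℕ) (hB : 1 ≤ B) (d : ℕ) (hd : 1 ≤ d) {α : Type} (S : Finset α) (g : α → ℕ)
    (hm : S.card ≤ 4 * d)
    (hsum : ∑ x ∈ S, (g x).choose B ≤ (B - 1) * ((4 * d).choose B)) :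
    ((∑ x ∈ S, g x : ℕ) : ℝ) ≤
      ((4 * B + 4 + 4 ^ B * B ^ B * B.factorial * B : ℕ) : ℝ) * (d : ℝ) ^ ((2:ℝ) - 1 / (B:ℝ)) := by
  have hB0 : (0:ℝ) < (B:ℝ) := by exact_mod_cast hB
  have hB1 : (1:ℝ) ≤ (B:ℝ) := by exact_mod_cast hB
  have hBne : (B:ℝ) ≠ 0 := ne_of_gt hB0
  have hd0 : (0:ℝ) < (d:ℝ) := by exact_mod_cast hd
  have hd1 : (1:ℝ) ≤ (d:ℝ) := by exact_mod_cast hd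
  set ε : ℝ := 1 - 1/(B:ℝ) with hε
  have hone : 1/(B:ℝ) ≤ 1 := by rw [div_le_one hB0]; exact hB1
  have hε0 : 0 ≤ ε := by rw [hε]; linarith
  set D : ℝ := (d:ℝ) ^ ε with hD
  have hD1 : (1:ℝ) ≤ D := Real.one_le_rpow hd1 hε0
  have hD0 : (0:ℝ) < D := lt_of_lt_of_le one_pos hD1
  have hpow1 : (d:ℝ) ^ ((2:ℝ) - 1/(B:ℝ)) = (d:ℝ) * D := by
    have h' : (d:ℝ) * D = (d:ℝ) ^ ((1:ℝ) + ε) := by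
      rw [Real.rpow_add hd0, Real.rpow_one, hD]
    rw [h']
    congr 1
    rw [hε]; ring
  have hpow2 : (d:ℝ) ^ ((2:ℝ) - 1/(B:ℝ)) * D ^ ((B:ℝ) - 1) = (d:ℝ) ^ (B:ℕ) := by
    rw [hD, ← Real.rpow_natCast (d:ℝ) B, ← Real.rpow_mul hd0.le, ← Real.rpow_add hd0]
    congr 1
    rw [hε]
    field_simp
    ring
  set P : α → Prop := fun x => ((g x : ℝ)) ≤ (B:ℝ) + D with hP
  have hsplit : ∑ x ∈ S.filter P, ((g x : ℕ):ℝ) + ∑ x ∈ S.filter (fun x => ¬ P x), ((g x:ℕ):ℝ)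
      = ∑ x ∈ S, ((g x:ℕ):ℝ) := Finset.sum_filter_add_sum_filter_not S P _
  have h1 : ∑ x ∈ S.filter P, ((g x:ℕ):ℝ) ≤ ((4*B+4:ℕ):ℝ) * (d:ℝ) ^ ((2:ℝ) - 1/(B:ℝ)) := by
    calc ∑ x ∈ S.filter P, ((g x:ℕ):ℝ) ≤ ∑ _x ∈ S.filter P, ((B:ℝ) + D) :=
          Finset.sum_le_sum (fun x hx => (Finset.mem_filter.mp hx).2)
      _ = ((S.filter P).card : ℝ) * ((B:ℝ) + D) := by rw [Finset.sum_const, nsmul_eq_mul]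
      _ ≤ (4*(d:ℝ)) * ((B:ℝ) + D) := by
          apply mul_le_mul_of_nonneg_right _ (by positivity)
          have h2 : ((S.filter P).card : ℝ) ≤ (S.card : ℝ) := by
            exact_mod_cast Finset.card_filter_le S P
          have h3 : ((S.card : ℕ):ℝ) ≤ ((4*d : ℕ):ℝ) := by exact_mod_cast hm
          push_cast at h3 ⊢
          linarith
      _ = 4*(B:ℝ)*(d:ℝ) + 4*((d:ℝ)*D) := by ring
      _ ≤ 4*(B:ℝ)*((d:ℝ) ^ ((2:ℝ) - 1/(B:ℝ))) + 4*((d:ℝ) ^ ((2:ℝ) - 1/(B:ℝ))) := by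
          rw [hpow1]
          have hdle : (d:ℝ) ≤ (d:ℝ) * D := le_mul_of_one_le_right hd0.le hD1
          nlinarith
      _ = ((4*B+4:ℕ):ℝ) * (d:ℝ) ^ ((2:ℝ) - 1/(B:ℝ)) := by push_cast; ring
  have h2 : ∑ x ∈ S.filter (fun x => ¬ P x), ((g x:ℕ):ℝ)
      ≤ ((4 ^ B * B ^ B * B.factorial * B : ℕ):ℝ) * (d:ℝ) ^ ((2:ℝ) - 1/(B:ℝ)) := by
    rw [← mul_le_mul_iff_of_pos_right (show (0:ℝ) < D ^ ((B:ℝ)-1) from Real.rpow_pos_of_pos hD0 _)]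
    have point : ∀ x ∈ S.filter (fun x => ¬ P x),
        ((g x:ℕ):ℝ) * D ^ ((B:ℝ)-1) ≤ ((B:ℝ))^(B:ℕ) * (B.factorial : ℝ) * ((g x).choose B : ℝ) := by
      intro x hx
      have hxP : (B:ℝ) + D < (g x : ℝ) := by
        have := (Finset.mem_filter.mp hx).2
        simp only [hP] at this; linarith [not_le.mp this]
      have hgB : B ≤ g x := by
        have h' : (B:ℝ) < (g x:ℝ) := by linarith
        exact_mod_cast h'.le
      have hg0 : (0:ℝ) < (g x:ℝ) := by linarith
      have hDg : D ≤ (g x:ℝ) := by linarith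
      have s1 : ((g x:ℕ):ℝ) * D ^ ((B:ℝ)-1) ≤ ((g x:ℝ)) ^ (B:ℕ) := by
        have e1 : ((g x:ℝ)) ^ (B:ℕ) = (g x:ℝ) * (g x:ℝ) ^ ((B:ℝ)-1) := by
          have h' : (g x:ℝ) * (g x:ℝ) ^ ((B:ℝ)-1) = (g x:ℝ) ^ ((1:ℝ) + ((B:ℝ)-1)) := by
            rw [Real.rpow_add hg0, Real.rpow_one]
          rw [h', ← Real.rpow_natCast (g x:ℝ) B]
          congr 1
          ring
        rw [e1]
        apply mul_le_mul_of_nonneg_left _ (by positivity)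
        exact Real.rpow_le_rpow hD0.le hDg (by linarith)
      have s2 : ((g x:ℝ)) ^ (B:ℕ) ≤ ((B:ℝ))^(B:ℕ) * (B.factorial : ℝ) * ((g x).choose B : ℝ) := by
        have hq : (g x:ℝ)/(B:ℝ) ≤ ((g x + 1 - B : ℕ) : ℝ) := by
          rw [Nat.cast_sub (by omega)]
          push_cast
          rw [div_le_iff₀ hB0]
          have hBR : (B:ℝ) ≤ (g x : ℝ) := by exact_mod_cast hgB
          nlinarith [mul_nonneg (sub_nonneg.mpr hBR) (sub_nonneg.mpr hB1)]
        have hq2 : ((g x:ℝ)/(B:ℝ))^(B:ℕ) ≤ (((g x + 1 - B : ℕ) : ℝ))^(B:ℕ) :=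
          pow_le_pow_left₀ (by positivity) hq B
        have hq3 : (((g x + 1 - B : ℕ) : ℝ))^(B:ℕ) / (B.factorial : ℝ) ≤ ((g x).choose B : ℝ) := by
          exact_mod_cast Nat.pow_le_choose (α := ℝ) B (g x)
        have hfac : (0:ℝ) < (B.factorial : ℝ) := by exact_mod_cast B.factorial_pos
        rw [div_pow] at hq2
        rw [div_le_iff₀ hfac] at hq3
        have hBpow : (0:ℝ) < ((B:ℝ))^(B:ℕ) := by positivity
        rw [div_le_iff₀ hBpow] at hq2
        calc ((g x:ℝ)) ^ (B:ℕ) ≤ (((g x + 1 - B : ℕ) : ℝ))^(B:ℕ) * ((B:ℝ))^(B:ℕ) := hq2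
          _ ≤ (((g x).choose B : ℝ) * (B.factorial : ℝ)) * ((B:ℝ))^(B:ℕ) :=
              mul_le_mul_of_nonneg_right hq3 hBpow.le
          _ = ((B:ℝ))^(B:ℕ) * (B.factorial : ℝ) * ((g x).choose B : ℝ) := by ring
      exact s1.trans s2
    calc (∑ x ∈ S.filter (fun x => ¬ P x), ((g x:ℕ):ℝ)) * D ^ ((B:ℝ)-1)
        = ∑ x ∈ S.filter (fun x => ¬ P x), ((g x:ℕ):ℝ) * D ^ ((B:ℝ)-1) := by
          rw [Finset.sum_mul]
      _ ≤ ∑ x ∈ S.filter (fun x => ¬ P x), ((B:ℝ))^(B:ℕ) * (B.factorial : ℝ) * ((g x).choose B : ℝ) :=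
          Finset.sum_le_sum point
      _ = ((B:ℝ))^(B:ℕ) * (B.factorial : ℝ) * ∑ x ∈ S.filter (fun x => ¬ P x), ((g x).choose B : ℝ) := by
          rw [Finset.mul_sum]
      _ ≤ ((B:ℝ))^(B:ℕ) * (B.factorial : ℝ) * ∑ x ∈ S, ((g x).choose B : ℝ) := by
          apply mul_le_mul_of_nonneg_left _ (by positivity)
          apply Finset.sum_le_sum_of_subset_of_nonneg (Finset.filter_subset _ _)
          intros; positivity
      _ ≤ ((B:ℝ))^(B:ℕ) * (B.factorial : ℝ) * (((B-1) * ((4*d).choose B) : ℕ) : ℝ) := by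
          apply mul_le_mul_of_nonneg_left _ (by positivity)
          exact_mod_cast hsum
      _ ≤ ((B:ℝ))^(B:ℕ) * (B.factorial : ℝ) * ((B:ℝ) * ((4:ℝ)*(d:ℝ))^(B:ℕ)) := by
          apply mul_le_mul_of_nonneg_left _ (by positivity)
          have c1 : ((4*d).choose B : ℝ) ≤ (((4*d)^B : ℕ):ℝ) := by
            exact_mod_cast Nat.choose_le_pow (4*d) B
          have c2 : ((B-1:ℕ):ℝ) ≤ (B:ℝ) := by
            have h' : (B-1:ℕ) ≤ B := by omega
            exact_mod_cast h'
          push_cast at c1 ⊢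
          have hch : (0:ℝ) ≤ ((4*d).choose B : ℝ) := by positivity
          nlinarith [mul_le_mul c2 c1 hch (by positivity : (0:ℝ) ≤ (B:ℝ))]
      _ = ((4 ^ B * B ^ B * B.factorial * B : ℕ):ℝ) * ((d:ℝ)^(B:ℕ)) := by
          push_cast
          rw [mul_pow]
          ring
      _ = ((4 ^ B * B ^ B * B.factorial * B : ℕ):ℝ) * ((d:ℝ) ^ ((2:ℝ) - 1/(B:ℝ)) * D ^ ((B:ℝ)-1)) := by
          rw [hpow2]
      _ = ((4 ^ B * B ^ B * B.factorial * B : ℕ):ℝ) * (d:ℝ) ^ ((2:ℝ) - 1/(B:ℝ)) * D ^ ((B:ℝ)-1) := by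
          ring
  push_cast at h1 h2 ⊢
  linarith [hsplit]

end Aux

/-- In a `d`-regular `K_{B,B}`-free graph, for any matching `M` and any `v ∈ M`, the
neighborhood of `v` in the contracted matching graph `G_M` spans at most `C·d^(2-1/B)`
edges (`C` depending only on `B`; pairs of adjacent neighbors are counted ordered, which
only changes the constant). -/
theorem contracted_neighborhood_few_edges (B : ℕ) (hB : 1 ≤ B) :
    ∃ C : ℝ, 0 < C ∧
      ∀ (V : Type) [Fintype V] (G : SimpleGraph V) (d : ℕ),
        G.IsRegularOfDegree d →
        (¬ ∃ (A A' : Finset V), A.card = B ∧ A'.card = B ∧ Disjoint A A' ∧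
            ∀ a ∈ A, ∀ b ∈ A', G.Adj a b) →
        ∀ M : Finset (Sym2 V),
          (↑M : Set (Sym2 V)) ⊆ G.edgeSet →
          (∀ e ∈ M, ∀ f ∈ M, e ≠ f → ∀ x : V, x ∈ e → x ∉ f) →
          ∀ v ∈ M,
            ((((M.filter (fun e => contractedAdj G v e)) ×ˢ
                (M.filter (fun e => contractedAdj G v e))).filter
                  (fun q => contractedAdj G q.1 q.2)).card : ℝ)
              ≤ C * (d : ℝ) ^ ((2 : ℝ) - 1 / (B : ℝ)) := by
  classical
  refine ⟨((4 * B + 4 + 4 ^ B * B ^ B * B.factorial * B : ℕ) : ℝ), ?_, ?_⟩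
  · have h : (0:ℕ) < 4 * B + 4 + 4 ^ B * B ^ B * B.factorial * B := by positivity
    exact_mod_cast h
  intro V _ G d hreg hK M hMedge hMmatch v hv
  have hexp : (0:ℝ) < (2:ℝ) - 1/(B:ℝ) := by
    have hB1 : (1:ℝ) ≤ (B:ℝ) := by exact_mod_cast hB
    have : 1/(B:ℝ) ≤ 1 := by rw [div_le_one (by linarith)]; exact hB1
    linarith
  by_cases hd : d = 0
  · subst hd
    have hempty : (((M.filter (fun e => contractedAdj G v e)) ×ˢ
        (M.filter (fun e => contractedAdj G v e))).filter
          (fun q => contractedAdj G q.1 q.2)) = ∅ := by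
      rw [Finset.eq_empty_iff_forall_notMem]
      rintro ⟨e, f⟩ hq
      obtain ⟨-, x, -, y, -, hadj⟩ := (Finset.mem_filter.mp hq).2
      have hy : y ∈ G.neighborFinset x := by rwa [SimpleGraph.mem_neighborFinset]
      have h0 : (G.neighborFinset x).card = 0 := hreg x
      rw [Finset.card_eq_zero] at h0
      simp [h0] at hy
    rw [hempty]
    simp only [Finset.card_empty, Nat.cast_zero]
    positivity
  · have hd1 : 1 ≤ d := Nat.one_le_iff_ne_zero.mpr hd
    revert hv
    induction v using Sym2.ind with
    | _ a b =>
    intro hv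
    set F := M.filter (fun e => contractedAdj G s(a,b) e) with hF
    have hFM : ∀ e ∈ F, e ∈ M := fun e he => (Finset.mem_filter.mp he).1
    set S := F.biUnion (fun e => univ.filter (· ∈ e)) with hS
    have hmemS : ∀ e ∈ F, ∀ x : V, x ∈ e → x ∈ S := by
      intro e he x hx
      rw [hS]
      exact Finset.mem_biUnion.mpr ⟨e, he, by simp [hx]⟩
    -- |F| ≤ 2d
    have hFcard : F.card ≤ 2 * d := by
      have hinj : F.card ≤ (G.neighborFinset a ∪ G.neighborFinset b).card := by
        apply Finset.card_le_card_of_injOn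
          (fun e => if h : contractedAdj G s(a,b) e then h.2.choose_spec.2.choose else a)
        · intro e he
          have h : contractedAdj G s(a,b) e := (Finset.mem_filter.mp he).2
          simp only [dif_pos h]
          have hxv : h.2.choose ∈ s(a,b) := h.2.choose_spec.1
          have hadj : G.Adj h.2.choose (h.2.choose_spec.2.choose) :=
            h.2.choose_spec.2.choose_spec.2
          obtain ⟨x, hxm, hxadj⟩ :
              ∃ x ∈ s(a,b), G.Adj x (h.2.choose_spec.2.choose) := ⟨h.2.choose, hxv, hadj⟩
          rcases Sym2.mem_iff.mp hxm with rfl | rfl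
          · exact Finset.mem_union_left _ (by
              rw [SimpleGraph.mem_neighborFinset]; exact hxadj)
          · exact Finset.mem_union_right _ (by
              rw [SimpleGraph.mem_neighborFinset]; exact hxadj)
        · intro e he e' he' heq
          have h : contractedAdj G s(a,b) e := (Finset.mem_filter.mp he).2
          have h' : contractedAdj G s(a,b) e' := (Finset.mem_filter.mp he').2
          simp only [dif_pos h, dif_pos h'] at heq
          by_contra hne
          have hmem : h.2.choose_spec.2.choose ∈ e := h.2.choose_spec.2.choose_spec.1
          have hmem' : h'.2.choose_spec.2.choose ∈ e' := h'.2.choose_spec.2.choose_spec.1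
          have hmem2 : h.2.choose_spec.2.choose ∈ e' := by rw [heq]; exact hmem'
          exact hMmatch e (hFM e he) e' (hFM e' he') hne _ hmem hmem2
      calc F.card ≤ (G.neighborFinset a ∪ G.neighborFinset b).card := hinj
        _ ≤ (G.neighborFinset a).card + (G.neighborFinset b).card := Finset.card_union_le _ _
        _ = d + d := by
            have ha : (G.neighborFinset a).card = d := hreg a
            have hb : (G.neighborFinset b).card = d := hreg b
            rw [ha, hb]
        _ = 2 * d := by ring
    -- |S| ≤ 4d
    have hScard : S.card ≤ 4 * d := by
      calc S.card ≤ ∑ e ∈ F, (univ.filter (· ∈ e)).card := Finset.card_biUnion_le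
        _ ≤ ∑ _e ∈ F, 2 := Finset.sum_le_sum (fun e _ => sym2_endpoints_card_le e)
        _ = F.card * 2 := by rw [Finset.sum_const, smul_eq_mul]
        _ ≤ 2 * d * 2 := by omega
        _ = 4 * d := by ring
    -- injection into adjacent pairs of S
    have hinj2 : ((F ×ˢ F).filter (fun q => contractedAdj G q.1 q.2)).card
        ≤ ((S ×ˢ S).filter (fun q : V × V => G.Adj q.1 q.2)).card := by
      apply Finset.card_le_card_of_injOn
        (fun q => if h : contractedAdj G q.1 q.2 then
          (h.2.choose, h.2.choose_spec.2.choose) else (a, a))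
      · rintro ⟨e, f⟩ hq
        rw [Finset.mem_coe, Finset.mem_filter] at hq
        obtain ⟨hef, h⟩ := hq
        rw [Finset.mem_product] at hef
        simp only [dif_pos h]
        have hx : h.2.choose ∈ e := h.2.choose_spec.1
        have hy : h.2.choose_spec.2.choose ∈ f := h.2.choose_spec.2.choose_spec.1
        have hadj : G.Adj h.2.choose h.2.choose_spec.2.choose :=
          h.2.choose_spec.2.choose_spec.2
        rw [Finset.mem_coe, Finset.mem_filter, Finset.mem_product]
        exact ⟨⟨hmemS e hef.1 _ hx, hmemS f hef.2 _ hy⟩, hadj⟩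
      · rintro ⟨e, f⟩ hq ⟨e', f'⟩ hq' heq
        rw [Finset.mem_coe, Finset.mem_filter, Finset.mem_product] at hq hq'
        obtain ⟨⟨he, hf⟩, h⟩ := hq
        obtain ⟨⟨he', hf'⟩, h'⟩ := hq'
        simp only [dif_pos h, dif_pos h', Prod.mk.injEq] at heq
        have hx : h.2.choose ∈ e := h.2.choose_spec.1
        have hy : h.2.choose_spec.2.choose ∈ f := h.2.choose_spec.2.choose_spec.1
        have hx' : h'.2.choose ∈ e' := h'.2.choose_spec.1
        have hy' : h'.2.choose_spec.2.choose ∈ f' := h'.2.choose_spec.2.choose_spec.1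
        have hee : e = e' := by
          by_contra hne
          have hx2 : h.2.choose ∈ e' := by rw [heq.1]; exact hx'
          exact hMmatch e (hFM e he) e' (hFM e' he') hne _ hx hx2
        have hff : f = f' := by
          by_contra hne
          have hy2 : h.2.choose_spec.2.choose ∈ f' := by rw [heq.2]; exact hy'
          exact hMmatch f (hFM f hf) f' (hFM f' hf') hne _ hy hy2
        simp [hee, hff]
    -- count adjacent pairs of S by degrees
    have hps : ((S ×ˢ S).filter (fun q : V × V => G.Adj q.1 q.2)).card
        = ∑ x ∈ S, (S.filter (G.Adj x)).card :=
      card_filter_product S _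
    -- core bound
    have hcore : ∑ x ∈ S, ((S.filter (G.Adj x)).card).choose B ≤ (B - 1) * ((4 * d).choose B) := by
      calc ∑ x ∈ S, ((S.filter (G.Adj x)).card).choose B
          ≤ (B - 1) * (S.card.choose B) := sum_choose_le hB hK S
        _ ≤ (B - 1) * ((4 * d).choose B) :=
            Nat.mul_le_mul_left _ (Nat.choose_le_choose B hScard)
    have hfinal := analytic B hB d hd1 S (fun x => (S.filter (G.Adj x)).card) hScard hcore
    calc (((F ×ˢ F).filter (fun q => contractedAdj G q.1 q.2)).card : ℝ)
        ≤ ((∑ x ∈ S, (S.filter (G.Adj x)).card : ℕ) : ℝ) := by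
          exact_mod_cast hps ▸ hinj2
      _ ≤ _ := hfinal
end

section
/- With the setup of the contracted matching graph: if G is n-vertex, d-regular, and K_{B,B}-free, then the contracted graph G_M has at most C·n·d^{2−1/B} triangles, where C depends only on B. -/
open Finset Nat

attribute [local instance] Classical.propDecidable

/-- `∏_{i<B} (B - i) = B!`. -/
lemma prod_range_sub_eq_factorial (B : ℕ) : (∏ i ∈ range B, (B - i)) = B ! := by
  have := Finset.prod_range_reflect (fun i => i + 1) B
  rw [Finset.prod_range_add_one_eq_factorial] at this
  rw [← this]
  apply Finset.prod_congr rfl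
  intro i hi
  rw [Finset.mem_range] at hi
  omega

/-- `B! · x^B ≤ B^B · x·(x-1)···(x-B+1)` for `B ≤ x`. -/
lemma factorial_mul_pow_le (B x : ℕ) (h : B ≤ x) :
    B ! * x ^ B ≤ B ^ B * x.descFactorial B := by
  rw [Nat.descFactorial_eq_prod_range, ← prod_range_sub_eq_factorial]
  have h1 : (∏ i ∈ range B, (B - i)) * x ^ B = ∏ i ∈ range B, ((B - i) * x) := by
    rw [Finset.prod_mul_distrib, Finset.prod_const, Finset.card_range]
  have h2 : B ^ B * ∏ i ∈ range B, (x - i) = ∏ i ∈ range B, (B * (x - i)) := by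
    rw [Finset.prod_mul_distrib, Finset.prod_const, Finset.card_range]
  rw [h1, h2]
  apply Finset.prod_le_prod'
  intro i hi
  rw [Finset.mem_range] at hi
  have h2 : B * i ≤ i * x := by
    calc B * i = i * B := Nat.mul_comm _ _
    _ ≤ i * x := Nat.mul_le_mul_left i h
  calc (B - i) * x = B * x - i * x := by rw [Nat.sub_mul]
  _ ≤ B * x - B * i := Nat.sub_le_sub_left h2 (B * x)
  _ = B * (x - i) := by rw [Nat.mul_sub]

/-- `(x/B)^B ≤ C(x,B) + 1` over the reals. -/
lemma div_pow_le_choose (B x : ℕ) (hB : 1 ≤ B) :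
    ((x : ℝ) / B) ^ B ≤ (x.choose B : ℝ) + 1 := by
  have hB0 : (0 : ℝ) < B := by exact_mod_cast hB
  rcases lt_or_ge x B with h | h
  · have h1 : (x : ℝ) / B ≤ 1 := by
      rw [div_le_one hB0]; exact_mod_cast h.le
    have h2 : ((x : ℝ) / B) ^ B ≤ 1 := pow_le_one₀ (by positivity) h1
    have h3 : (0 : ℝ) ≤ (x.choose B : ℝ) := by positivity
    linarith
  · have key : B ! * x ^ B ≤ B ^ B * x.descFactorial B := factorial_mul_pow_le B x h
    rw [Nat.descFactorial_eq_factorial_mul_choose, ← Nat.mul_assoc, Nat.mul_comm (B ^ B) (B !),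
      Nat.mul_assoc] at key
    have key2 : x ^ B ≤ B ^ B * x.choose B :=
      Nat.le_of_mul_le_mul_left key (Nat.factorial_pos B)
    have key3 : (x : ℝ) ^ B ≤ (B : ℝ) ^ B * (x.choose B : ℝ) := by exact_mod_cast key2
    rw [div_pow, div_le_iff₀ (by positivity)]
    nlinarith [pow_pos hB0 B]

/-- In a `K_{B,B}`-free graph, any `B` vertices have at most `2B-1` common neighbors. -/
lemma codeg {V : Type} [Fintype V] (G : SimpleGraph V) {B : ℕ}
    (hK : ¬ ∃ (A A' : Finset V), A.card = B ∧ A'.card = B ∧ Disjoint A A' ∧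
        ∀ a ∈ A, ∀ b ∈ A', G.Adj a b)
    (A : Finset V) (hA : A.card = B) :
    ((univ : Finset V).filter fun v => ∀ a ∈ A, G.Adj a v).card ≤ 2 * B - 1 := by
  by_contra hcon
  push_neg at hcon
  set N := (univ : Finset V).filter fun v => ∀ a ∈ A, G.Adj a v with hN
  have hB1 : 1 ≤ B := by
    by_contra hB0
    have hB0' : B = 0 := by omega
    subst hB0'
    exact hK ⟨∅, ∅, by simp, by simp, by simp, by simp⟩
  have hNB : B ≤ (N \ A).card := by
    have h1 := Finset.le_card_sdiff A N
    omega
  obtain ⟨A', hA'sub, hA'card⟩ := Finset.exists_subset_card_eq hNB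
  apply hK
  refine ⟨A, A', hA, hA'card, (Finset.sdiff_disjoint.mono_left hA'sub).symm, ?_⟩
  intro a ha b hb
  have hbN : b ∈ N := (Finset.sdiff_subset (hA'sub hb))
  rw [hN, Finset.mem_filter] at hbN
  exact hbN.2 a ha

/-- Double count: sum of `C(deg_W v, B)` over `v ∈ W` is at most `2B · |W|^B`. -/
lemma double_count {V : Type} [Fintype V] (G : SimpleGraph V) {B : ℕ} (hB : 1 ≤ B)
    (hK : ¬ ∃ (A A' : Finset V), A.card = B ∧ A'.card = B ∧ Disjoint A A' ∧
        ∀ a ∈ A, ∀ b ∈ A', G.Adj a b)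
    (W : Finset V) :
    ∑ v ∈ W, ((W.filter (G.Adj v)).card).choose B ≤ 2 * B * W.card ^ B := by
  have h1 : ∑ v ∈ W, ((W.filter (G.Adj v)).card).choose B
      = (W.sigma fun v => (W.filter (G.Adj v)).powersetCard B).card := by
    rw [Finset.card_sigma]
    apply Finset.sum_congr rfl
    intro v _
    rw [Finset.card_powersetCard]
  rw [h1]
  have h2 : (W.sigma fun v => (W.filter (G.Adj v)).powersetCard B).card
      ≤ ((W.powersetCard B).sigma fun A =>
          (univ : Finset V).filter fun v => ∀ a ∈ A, G.Adj a v).card := by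
    apply Finset.card_le_card_of_injOn (fun p => ⟨p.2, p.1⟩)
    · intro p hp
      rw [Finset.mem_coe, Finset.mem_sigma] at hp
      obtain ⟨hv, hA⟩ := hp
      rw [Finset.mem_powersetCard] at hA
      rw [Finset.mem_coe, Finset.mem_sigma, Finset.mem_powersetCard]
      refine ⟨⟨hA.1.trans (Finset.filter_subset _ _), hA.2⟩, ?_⟩
      rw [Finset.mem_filter]
      refine ⟨Finset.mem_univ _, ?_⟩
      intro a ha
      have := hA.1 ha
      rw [Finset.mem_filter] at this
      exact this.2.symm
    · intro p _ q _ hpq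
      simp only [Sigma.mk.inj_iff, heq_eq_eq] at hpq
      exact Sigma.ext hpq.2 (heq_of_eq hpq.1)
  have h3 : ((W.powersetCard B).sigma fun A =>
      (univ : Finset V).filter fun v => ∀ a ∈ A, G.Adj a v).card
      ≤ (W.powersetCard B).card * (2 * B - 1) := by
    rw [Finset.card_sigma]
    calc ∑ A ∈ W.powersetCard B,
        ((univ : Finset V).filter fun v => ∀ a ∈ A, G.Adj a v).card
        ≤ ∑ _A ∈ W.powersetCard B, (2 * B - 1) := by
          apply Finset.sum_le_sum
          intro A hA
          exact codeg G hK A (Finset.mem_powersetCard.1 hA).2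
      _ = (W.powersetCard B).card * (2 * B - 1) := by rw [Finset.sum_const, smul_eq_mul]
  calc (W.sigma fun v => (W.filter (G.Adj v)).powersetCard B).card
      ≤ (W.powersetCard B).card * (2 * B - 1) := h2.trans h3
    _ ≤ W.card ^ B * (2 * B) := by
        apply Nat.mul_le_mul
        · rw [Finset.card_powersetCard]; exact Nat.choose_le_pow _ _
        · omega
    _ = 2 * B * W.card ^ B := Nat.mul_comm _ _

/-- KST-type bound: the number of ordered adjacent pairs inside `W` raised to the `B`-th
power is at most `B^B (2B+1) |W|^(2B-1)`. -/
lemma kst {V : Type} [Fintype V] (G : SimpleGraph V) {B : ℕ} (hB : 1 ≤ B)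
    (hK : ¬ ∃ (A A' : Finset V), A.card = B ∧ A'.card = B ∧ Disjoint A A' ∧
        ∀ a ∈ A, ∀ b ∈ A', G.Adj a b)
    (W : Finset V) :
    ((((W ×ˢ W).filter fun p => G.Adj p.1 p.2).card : ℝ)) ^ B
      ≤ (B : ℝ) ^ B * (2 * B + 1) * (W.card : ℝ) ^ (2 * B - 1) := by
  obtain ⟨B', rfl⟩ : ∃ B', B = B' + 1 := ⟨B - 1, by omega⟩
  set m : ℕ := W.card with hm
  -- express count as sum of degrees
  have hP : ((W ×ˢ W).filter fun p => G.Adj p.1 p.2).card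
      = ∑ v ∈ W, (W.filter (G.Adj v)).card := by
    rw [← Finset.card_sigma]
    apply Finset.card_bij (fun p _ => ⟨p.1, p.2⟩)
    · intro p hp
      rw [Finset.mem_filter, Finset.mem_product] at hp
      rw [Finset.mem_sigma, Finset.mem_filter]
      exact ⟨hp.1.1, hp.1.2, hp.2⟩
    · intro p hp q hq h
      simp only [Sigma.mk.inj_iff, heq_eq_eq] at h
      exact Prod.ext h.1 h.2
    · intro p hp
      rw [Finset.mem_sigma, Finset.mem_filter] at hp
      exact ⟨(p.1, p.2), by
        rw [Finset.mem_filter, Finset.mem_product]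
        exact ⟨⟨hp.1, hp.2.1⟩, hp.2.2⟩, rfl⟩
  rw [hP]
  rcases Finset.eq_empty_or_nonempty W with hW | hW
  · subst hW; simp; positivity
  have hm0 : (0 : ℝ) < m := by exact_mod_cast Finset.card_pos.2 hW
  have hBR : (0 : ℝ) < (B' + 1 : ℕ) := by positivity
  -- power mean
  have pm := pow_sum_div_card_le_sum_pow
    (s := W) (f := fun v => ((W.filter (G.Adj v)).card : ℝ))
    (fun i _ => by positivity) B'
  rw [div_le_iff₀ (by positivity)] at pm
  have cast_sum : ((∑ v ∈ W, (W.filter (G.Adj v)).card : ℕ) : ℝ)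
      = ∑ v ∈ W, ((W.filter (G.Adj v)).card : ℝ) := by push_cast; rfl
  rw [cast_sum]
  -- bound the sum of B-th powers of degrees
  have hdeg : ∀ v ∈ W, ((W.filter (G.Adj v)).card : ℝ) ^ (B' + 1)
      ≤ ((B' + 1 : ℕ) : ℝ) ^ (B' + 1) *
        ((((W.filter (G.Adj v)).card).choose (B' + 1) : ℝ) + 1) := by
    intro v _
    have h1 := div_pow_le_choose (B' + 1) ((W.filter (G.Adj v)).card) (by omega)
    have h2 : (((W.filter (G.Adj v)).card : ℝ) / ((B' + 1 : ℕ) : ℝ)) ^ (B' + 1)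
        * ((B' + 1 : ℕ) : ℝ) ^ (B' + 1)
        = ((W.filter (G.Adj v)).card : ℝ) ^ (B' + 1) := by
      rw [div_pow, div_mul_cancel₀]
      positivity
    nlinarith [pow_pos hBR (B' + 1), pow_nonneg (le_of_lt hBR) (B' + 1)]
  have hsum : ∑ v ∈ W, ((W.filter (G.Adj v)).card : ℝ) ^ (B' + 1)
      ≤ ((B' + 1 : ℕ) : ℝ) ^ (B' + 1) * ((2 * (B' + 1) + 1) * (m : ℝ) ^ (B' + 1)) := by
    calc ∑ v ∈ W, ((W.filter (G.Adj v)).card : ℝ) ^ (B' + 1)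
        ≤ ∑ v ∈ W, ((B' + 1 : ℕ) : ℝ) ^ (B' + 1) *
            ((((W.filter (G.Adj v)).card).choose (B' + 1) : ℝ) + 1) :=
          Finset.sum_le_sum hdeg
      _ = ((B' + 1 : ℕ) : ℝ) ^ (B' + 1) *
            ((∑ v ∈ W, (((W.filter (G.Adj v)).card).choose (B' + 1) : ℝ)) + m) := by
          rw [← Finset.mul_sum, Finset.sum_add_distrib, Finset.sum_const, nsmul_eq_mul,
            mul_one, hm]
      _ ≤ ((B' + 1 : ℕ) : ℝ) ^ (B' + 1) * ((2 * (B' + 1) + 1) * (m : ℝ) ^ (B' + 1)) := by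
          apply mul_le_mul_of_nonneg_left _ (by positivity)
          have hd := double_count G (by omega : 1 ≤ B' + 1) hK W
          have hd' : (∑ v ∈ W, (((W.filter (G.Adj v)).card).choose (B' + 1) : ℝ))
              ≤ 2 * (B' + 1) * (m : ℝ) ^ (B' + 1) := by
            have : ((∑ v ∈ W, ((W.filter (G.Adj v)).card).choose (B' + 1) : ℕ) : ℝ)
                ≤ ((2 * (B' + 1) * W.card ^ (B' + 1) : ℕ) : ℝ) := by exact_mod_cast hd
            push_cast at this
            convert this using 2
          have hmm : (m : ℝ) ≤ (m : ℝ) ^ (B' + 1) := by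
            have := Nat.le_self_pow (n := B' + 1) (by omega) m
            calc (m : ℝ) ≤ ((m ^ (B' + 1) : ℕ) : ℝ) := by exact_mod_cast this
              _ = (m : ℝ) ^ (B' + 1) := by push_cast; ring
          nlinarith [pow_nonneg (le_of_lt hm0) (B' + 1)]
  have hexp : 2 * (B' + 1) - 1 = (B' + 1) + B' := by omega
  calc (∑ v ∈ W, ((W.filter (G.Adj v)).card : ℝ)) ^ (B' + 1)
      ≤ (∑ v ∈ W, ((W.filter (G.Adj v)).card : ℝ) ^ (B' + 1)) * ((W.card : ℝ)) ^ B' := pm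
    _ ≤ ((B' + 1 : ℕ) : ℝ) ^ (B' + 1) * ((2 * (B' + 1) + 1) * (m : ℝ) ^ (B' + 1))
          * ((W.card : ℝ)) ^ B' := by
        apply mul_le_mul_of_nonneg_right hsum (by positivity)
    _ = ((B' + 1 : ℕ) : ℝ) ^ (B' + 1) * (2 * ((B' + 1 : ℕ) : ℝ) + 1)
          * ((W.card : ℝ)) ^ (2 * (B' + 1) - 1) := by
        rw [hexp, pow_add, hm]
        push_cast
        ring

/-- Extraction of the `d^(2 - 1/B)` bound from the `B`-th power inequality. -/
lemma rpow_extract (B d : ℕ) (hB : 1 ≤ B) (c P : ℝ) (hc : 0 < c) (hP : 0 ≤ P)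
    (h : P ^ B ≤ c * ((4 * d : ℕ) : ℝ) ^ (2 * B - 1)) :
    P ≤ c ^ ((1 : ℝ) / B) * 16 * (d : ℝ) ^ ((2 : ℝ) - 1 / (B : ℝ)) := by
  have hB0 : (0 : ℝ) < B := by exact_mod_cast hB
  have hX : (0 : ℝ) ≤ ((4 * d : ℕ) : ℝ) := by positivity
  have hε : ((2 * B - 1 : ℕ) : ℝ) / (B : ℝ) = (2 : ℝ) - 1 / (B : ℝ) := by
    rw [Nat.cast_sub (by omega)]
    push_cast
    field_simp
  have step1 : P = (P ^ B) ^ ((1 : ℝ) / (B : ℝ)) := by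
    rw [← Real.rpow_natCast P B, ← Real.rpow_mul hP, mul_one_div, div_self hB0.ne',
      Real.rpow_one]
  have step2 : (P ^ B) ^ ((1 : ℝ) / (B : ℝ))
      ≤ (c * ((4 * d : ℕ) : ℝ) ^ (2 * B - 1)) ^ ((1 : ℝ) / (B : ℝ)) :=
    Real.rpow_le_rpow (pow_nonneg hP B) h (by positivity)
  have step3 : (c * ((4 * d : ℕ) : ℝ) ^ (2 * B - 1)) ^ ((1 : ℝ) / (B : ℝ))
      = c ^ ((1 : ℝ) / (B : ℝ)) *
        (((4 * d : ℕ) : ℝ) ^ ((2 : ℝ) - 1 / (B : ℝ))) := by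
    rw [Real.mul_rpow hc.le (by positivity), ← Real.rpow_natCast ((4 * d : ℕ) : ℝ) (2 * B - 1),
      ← Real.rpow_mul hX, ← hε]
    ring_nf
  have step4 : ((4 * d : ℕ) : ℝ) ^ ((2 : ℝ) - 1 / (B : ℝ))
      ≤ 16 * (d : ℝ) ^ ((2 : ℝ) - 1 / (B : ℝ)) := by
    have h4 : ((4 * d : ℕ) : ℝ) = (4 : ℝ) * (d : ℝ) := by push_cast; ring
    rw [h4, Real.mul_rpow (by norm_num) (by positivity)]
    apply mul_le_mul_of_nonneg_right _ (Real.rpow_nonneg (by positivity) _)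
    calc (4 : ℝ) ^ ((2 : ℝ) - 1 / (B : ℝ))
        ≤ (4 : ℝ) ^ (2 : ℝ) := by
          apply Real.rpow_le_rpow_of_exponent_le (by norm_num)
          have : 0 < 1 / (B : ℝ) := by positivity
          linarith
      _ = 16 := by
          rw [show (2 : ℝ) = ((2 : ℕ) : ℝ) by norm_num, Real.rpow_natCast]
          norm_num
  calc P = (P ^ B) ^ ((1 : ℝ) / (B : ℝ)) := step1
    _ ≤ c ^ ((1 : ℝ) / (B : ℝ)) * (((4 * d : ℕ) : ℝ) ^ ((2 : ℝ) - 1 / (B : ℝ))) := by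
        rw [← step3]; exact step2
    _ ≤ c ^ ((1 : ℝ) / (B : ℝ)) * (16 * (d : ℝ) ^ ((2 : ℝ) - 1 / (B : ℝ))) :=
        mul_le_mul_of_nonneg_left step4 (Real.rpow_nonneg hc.le _)
    _ = c ^ ((1 : ℝ) / B) * 16 * (d : ℝ) ^ ((2 : ℝ) - 1 / (B : ℝ)) := by ring

/-- If `G` is `n`-vertex, `d`-regular and `K_{B,B}`-free and `M` is a matching of size at
most `n/2`, then the contracted matching graph `G_M` has at most `C·n·d^(2-1/B)` triangles
(`C` depending only on `B`; triangles are counted as ordered triples, which only changes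
the constant). -/
theorem contracted_graph_few_triangles (B : ℕ) (hB : 1 ≤ B) :
    ∃ C : ℝ, 0 < C ∧
      ∀ (V : Type) [Fintype V] (G : SimpleGraph V) (d : ℕ),
        G.IsRegularOfDegree d →
        (¬ ∃ (A A' : Finset V), A.card = B ∧ A'.card = B ∧ Disjoint A A' ∧
            ∀ a ∈ A, ∀ b ∈ A', G.Adj a b) →
        ∀ M : Finset (Sym2 V),
          (↑M : Set (Sym2 V)) ⊆ G.edgeSet →
          (∀ e ∈ M, ∀ f ∈ M, e ≠ f → ∀ x : V, x ∈ e → x ∉ f) →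
          2 * M.card ≤ Fintype.card V →
          ((((M ×ˢ M) ×ˢ M).filter (fun q =>
              contractedAdj G q.1.1 q.1.2 ∧ contractedAdj G q.1.2 q.2 ∧
                contractedAdj G q.1.1 q.2)).card : ℝ)
            ≤ C * (Fintype.card V : ℝ) * (d : ℝ) ^ ((2 : ℝ) - 1 / (B : ℝ)) := by
  set c : ℝ := (B : ℝ) ^ B * (2 * B + 1) with hc_def
  have hc : 0 < c := by
    have hB0 : (0 : ℝ) < B := by exact_mod_cast hB
    positivity
  refine ⟨c ^ ((1 : ℝ) / B) * 16, by positivity, ?_⟩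
  intro V _ G d hreg hK M hMedge hMmatch hMcard
  set K : ℝ := c ^ ((1 : ℝ) / B) * 16 with hK_def
  have hKpos : 0 < K := by positivity
  have hεpos : (0 : ℝ) ≤ (d : ℝ) ^ ((2 : ℝ) - 1 / (B : ℝ)) := Real.rpow_nonneg (by positivity) _
  -- handle empty V
  rcases isEmpty_or_nonempty V with hV | hV
  · have hn : Fintype.card V = 0 := Fintype.card_eq_zero
    have hM0 : M = ∅ := by
      rw [hn] at hMcard
      have : M.card = 0 := by omega
      exact Finset.card_eq_zero.1 this
    subst hM0
    simp [hn]
  obtain ⟨v₀⟩ := hV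
  -- endpoints of matching edges adjacent to e
  set We : Sym2 V → Finset V := fun e =>
    (M.filter fun f => contractedAdj G e f).biUnion fun f => univ.filter (· ∈ f) with hWe_def
  -- endpoint sets have at most two elements
  have hend : ∀ f : Sym2 V, (univ.filter (· ∈ f) : Finset V).card ≤ 2 := by
    intro f
    induction f with
    | _ a b =>
      calc (univ.filter (· ∈ s(a, b)) : Finset V).card ≤ ({a, b} : Finset V).card := by
            apply Finset.card_le_card
            intro x hx
            rw [Finset.mem_filter] at hx
            rw [Sym2.mem_iff] at hx
            simpa using hx.2
        _ ≤ 2 := Finset.card_le_two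
  -- number of matching edges adjacent to e is at most 2d
  have hM' : ∀ e ∈ M, (M.filter fun f => contractedAdj G e f).card ≤ 2 * d := by
    intro e _
    have hinj : (M.filter fun f => contractedAdj G e f).card
        ≤ ((univ.filter (· ∈ e) : Finset V).sigma fun u =>
            univ.filter fun y => G.Adj u y).card := by
      apply Finset.card_le_card_of_injOn (fun f =>
        if h : contractedAdj G e f then ⟨h.2.choose, h.2.choose_spec.2.choose⟩
        else ⟨v₀, v₀⟩)
      · intro f hf
        rw [Finset.mem_coe, Finset.mem_filter] at hf
        simp only [dif_pos hf.2]
        obtain ⟨hx, y, hy, hadj⟩ := hf.2.2.choose_spec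
        rw [Finset.mem_coe, Finset.mem_sigma, Finset.mem_filter, Finset.mem_filter]
        exact ⟨⟨Finset.mem_univ _, hx⟩, Finset.mem_univ _,
          hf.2.2.choose_spec.2.choose_spec.2⟩
      · intro f hf g hg hfg
        rw [Finset.mem_coe, Finset.mem_filter] at hf hg
        simp only [dif_pos hf.2, dif_pos hg.2] at hfg
        simp only [Sigma.mk.inj_iff, heq_eq_eq] at hfg
        have hyf : hf.2.2.choose_spec.2.choose ∈ f := hf.2.2.choose_spec.2.choose_spec.1
        have hyg : hg.2.2.choose_spec.2.choose ∈ g := hg.2.2.choose_spec.2.choose_spec.1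
        rw [hfg.2] at hyf
        by_contra hne
        exact hMmatch f hf.1 g hg.1 hne _ hyf hyg
    have hcard : ((univ.filter (· ∈ e) : Finset V).sigma fun u =>
        univ.filter fun y => G.Adj u y).card ≤ 2 * d := by
      rw [Finset.card_sigma]
      calc ∑ u ∈ univ.filter (· ∈ e), (univ.filter fun y => G.Adj u y).card
          = ∑ u ∈ univ.filter (· ∈ e), d := by
            apply Finset.sum_congr rfl
            intro u _
            have : (univ.filter fun y => G.Adj u y) = G.neighborFinset u := by
              ext y
              simp [SimpleGraph.mem_neighborFinset]
            rw [this]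
            exact hreg u
        _ = (univ.filter (· ∈ e) : Finset V).card * d := by
            rw [Finset.sum_const, smul_eq_mul]
        _ ≤ 2 * d := Nat.mul_le_mul_right d (hend e)
    exact hinj.trans hcard
  -- |We e| ≤ 4d
  have hWcard : ∀ e ∈ M, (We e).card ≤ 4 * d := by
    intro e he
    calc (We e).card ≤ ∑ f ∈ M.filter fun f => contractedAdj G e f,
          (univ.filter (· ∈ f) : Finset V).card := Finset.card_biUnion_le
      _ ≤ ∑ _f ∈ M.filter fun f => contractedAdj G e f, 2 :=
          Finset.sum_le_sum fun f _ => hend f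
      _ = (M.filter fun f => contractedAdj G e f).card * 2 := by
          rw [Finset.sum_const, smul_eq_mul]
      _ ≤ 2 * d * 2 := Nat.mul_le_mul_right 2 (hM' e he)
      _ = 4 * d := by ring
  -- the triangle count injects into Σ_{e∈M} (adjacent pairs in We e)
  set T := ((M ×ˢ M) ×ˢ M).filter (fun q =>
      contractedAdj G q.1.1 q.1.2 ∧ contractedAdj G q.1.2 q.2 ∧
        contractedAdj G q.1.1 q.2) with hT_def
  have hTle : T.card ≤ (M.sigma fun e =>
      ((We e) ×ˢ (We e)).filter fun p => G.Adj p.1 p.2).card := by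
    apply Finset.card_le_card_of_injOn (fun q =>
      if h : contractedAdj G q.1.2 q.2 then
        ⟨q.1.1, (h.2.choose, h.2.choose_spec.2.choose)⟩
      else ⟨q.1.1, (v₀, v₀)⟩)
    · intro q hq
      rw [hT_def, Finset.mem_coe, Finset.mem_filter, Finset.mem_product, Finset.mem_product] at hq
      obtain ⟨⟨⟨he, hf⟩, hg⟩, h12, h23, h13⟩ := hq
      simp only [dif_pos h23]
      rw [Finset.mem_coe, Finset.mem_sigma, Finset.mem_filter, Finset.mem_product]
      have hx : h23.2.choose ∈ q.1.2 := h23.2.choose_spec.1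
      have hy : h23.2.choose_spec.2.choose ∈ q.2 := h23.2.choose_spec.2.choose_spec.1
      have hadj : G.Adj h23.2.choose h23.2.choose_spec.2.choose :=
        h23.2.choose_spec.2.choose_spec.2
      refine ⟨he, ⟨?_, ?_⟩, hadj⟩
      · rw [hWe_def]
        apply Finset.mem_biUnion.2
        exact ⟨q.1.2, Finset.mem_filter.2 ⟨hf, h12⟩,
          Finset.mem_filter.2 ⟨Finset.mem_univ _, hx⟩⟩
      · rw [hWe_def]
        apply Finset.mem_biUnion.2
        exact ⟨q.2, Finset.mem_filter.2 ⟨hg, h13⟩,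
          Finset.mem_filter.2 ⟨Finset.mem_univ _, hy⟩⟩
    · intro q hq q' hq' heq
      rw [Finset.mem_coe, hT_def, Finset.mem_filter, Finset.mem_product,
        Finset.mem_product] at hq hq'
      obtain ⟨⟨⟨he, hf⟩, hg⟩, h12, h23, h13⟩ := hq
      obtain ⟨⟨⟨he', hf'⟩, hg'⟩, h12', h23', h13'⟩ := hq'
      simp only [dif_pos h23, dif_pos h23'] at heq
      simp only [Sigma.mk.inj_iff, heq_eq_eq, Prod.mk.injEq] at heq
      obtain ⟨hee, hxx, hyy⟩ := heq
      have hx : h23.2.choose ∈ q.1.2 := h23.2.choose_spec.1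
      have hx' : h23'.2.choose ∈ q'.1.2 := h23'.2.choose_spec.1
      have hy : h23.2.choose_spec.2.choose ∈ q.2 := h23.2.choose_spec.2.choose_spec.1
      have hy' : h23'.2.choose_spec.2.choose ∈ q'.2 := h23'.2.choose_spec.2.choose_spec.1
      rw [hxx] at hx
      rw [hyy] at hy
      have hff : q.1.2 = q'.1.2 := by
        by_contra hne
        exact hMmatch q.1.2 hf q'.1.2 hf' hne _ hx hx'
      have hgg : q.2 = q'.2 := by
        by_contra hne
        exact hMmatch q.2 hg q'.2 hg' hne _ hy hy'
      exact Prod.ext (Prod.ext hee hff) hgg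
  rw [Finset.card_sigma] at hTle
  -- per-edge bound
  have hPe : ∀ e ∈ M, ((((We e) ×ˢ (We e)).filter fun p => G.Adj p.1 p.2).card : ℝ)
      ≤ K * (d : ℝ) ^ ((2 : ℝ) - 1 / (B : ℝ)) := by
    intro e he
    have h1 := kst G hB hK (We e)
    have h2 : (((We e).card : ℝ)) ^ (2 * B - 1) ≤ (((4 * d : ℕ) : ℝ)) ^ (2 * B - 1) := by
      apply pow_le_pow_left₀ (by positivity)
      exact_mod_cast hWcard e he
    have h3 : ((((We e) ×ˢ (We e)).filter fun p => G.Adj p.1 p.2).card : ℝ) ^ B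
        ≤ c * ((4 * d : ℕ) : ℝ) ^ (2 * B - 1) := by
      calc ((((We e) ×ˢ (We e)).filter fun p => G.Adj p.1 p.2).card : ℝ) ^ B
          ≤ c * (((We e).card : ℝ)) ^ (2 * B - 1) := h1
        _ ≤ c * ((4 * d : ℕ) : ℝ) ^ (2 * B - 1) := mul_le_mul_of_nonneg_left h2 hc.le
    have := rpow_extract B d hB c _ hc (by positivity) h3
    calc ((((We e) ×ˢ (We e)).filter fun p => G.Adj p.1 p.2).card : ℝ)
        ≤ c ^ ((1 : ℝ) / B) * 16 * (d : ℝ) ^ ((2 : ℝ) - 1 / (B : ℝ)) := this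
      _ = K * (d : ℝ) ^ ((2 : ℝ) - 1 / (B : ℝ)) := by rw [hK_def]
  -- assemble
  have hMn : (M.card : ℝ) ≤ (Fintype.card V : ℝ) := by
    have : M.card ≤ Fintype.card V := by omega
    exact_mod_cast this
  calc (T.card : ℝ)
      ≤ ((∑ e ∈ M, (((We e) ×ˢ (We e)).filter fun p => G.Adj p.1 p.2).card : ℕ) : ℝ) := by
        exact_mod_cast hTle
    _ = ∑ e ∈ M, ((((We e) ×ˢ (We e)).filter fun p => G.Adj p.1 p.2).card : ℝ) := by
        push_cast; rfl
    _ ≤ ∑ _e ∈ M, K * (d : ℝ) ^ ((2 : ℝ) - 1 / (B : ℝ)) := Finset.sum_le_sum hPe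
    _ = (M.card : ℝ) * (K * (d : ℝ) ^ ((2 : ℝ) - 1 / (B : ℝ))) := by
        rw [Finset.sum_const, nsmul_eq_mul]
    _ ≤ (Fintype.card V : ℝ) * (K * (d : ℝ) ^ ((2 : ℝ) - 1 / (B : ℝ))) := by
        apply mul_le_mul_of_nonneg_right hMn (by positivity)
    _ = c ^ ((1 : ℝ) / B) * 16 * (Fintype.card V : ℝ) * (d : ℝ) ^ ((2 : ℝ) - 1 / (B : ℝ)) := by
        rw [hK_def]; ring
end
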